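/- arXiv:1009.4311 — 5 statements merged into one kernel-verified Lean document; each statement's English description precedes it below -/
import Mathlib

section
/- Let A be a real n×n matrix that is Metzler and nilpotent, and let α > 0, β > 0. Then for every t ≥ 0 the Mittag-Leffler matrix function E_{α,β}(A t^α) = Σ_{ℓ=0}^∞ t^{αℓ} A^ℓ / Γ(αℓ + β) is entrywise nonnegative. -/
/-- A real `n × n` matrix is *Metzler* if all of its off-diagonal entries are nonnegative. -/
def Matrix.IsMetzler {n : ℕ} (A : Matrix (Fin n) (Fin n) ℝ) : Prop :=
  ∀ i j : Fin n, i ≠ j → 0 ≤ A i j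

lemma metzler_nilpotent_entrywise_nonneg {n : ℕ} (A : Matrix (Fin n) (Fin n) ℝ)
    (hA : A.IsMetzler) (hnil : IsNilpotent A) : ∀ i j, 0 ≤ A i j := by
  -- trace (A^2) = 0 since A^2 is nilpotent
  obtain ⟨N, hN⟩ := hnil
  have h2 : IsNilpotent (A ^ 2) := ⟨N, by rw [← pow_mul, mul_comm, pow_mul, hN]; simp⟩
  have htr : (A ^ 2).trace = 0 := (Matrix.isNilpotent_trace_of_isNilpotent h2).eq_zero
  have hterm : ∀ i j : Fin n, 0 ≤ A i j * A j i := by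
    intro i j
    rcases eq_or_ne i j with rfl | hij
    · exact mul_self_nonneg _
    · exact mul_nonneg (hA i j hij) (hA j i hij.symm)
  have hsum : ∑ i : Fin n, ∑ j : Fin n, A i j * A j i = 0 := by
    have : (A ^ 2).trace = ∑ i : Fin n, ∑ j : Fin n, A i j * A j i := by
      simp [Matrix.trace, Matrix.diag, pow_two, Matrix.mul_apply]
    linarith [htr, this]
  have hzero : ∀ i j : Fin n, A i j * A j i = 0 := by
    have h1 : ∀ i ∈ Finset.univ, (0:ℝ) ≤ ∑ j : Fin n, A i j * A j i :=
      fun i _ => Finset.sum_nonneg fun j _ => hterm i j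
    intro i j
    have h2 : ∑ j : Fin n, A i j * A j i = 0 :=
      (Finset.sum_eq_zero_iff_of_nonneg h1).mp hsum i (Finset.mem_univ i)
    exact (Finset.sum_eq_zero_iff_of_nonneg fun j _ => hterm i j).mp h2 j (Finset.mem_univ j)
  intro i j
  rcases eq_or_ne i j with rfl | hij
  · have := hzero i i
    have : A i i = 0 := by nlinarith [this]
    simp [this]
  · exact hA i j hij

/-- If `A` is a real `n × n` Metzler nilpotent matrix and `α > 0`, `β > 0`,
then for every `t ≥ 0` the Mittag-Leffler matrix function
`E_{α,β}(A t^α) = Σ_{ℓ} (t^(αℓ) / Γ(αℓ + β)) • A^ℓ` is entrywise nonnegative. -/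
theorem mittagLeffler_nonneg_of_metzler_nilpotent {n : ℕ} (A : Matrix (Fin n) (Fin n) ℝ)
    (hA : A.IsMetzler) (hnil : IsNilpotent A) (α β : ℝ) (hα : 0 < α) (hβ : 0 < β)
    (t : ℝ) (ht : 0 ≤ t) :
    ∀ i j : Fin n,
      0 ≤ (∑' ℓ : ℕ, (t ^ (α * ℓ) / Real.Gamma (α * ℓ + β)) • A ^ ℓ) i j := by
  have hAnn := metzler_nilpotent_entrywise_nonneg A hA hnil
  have hpow : ∀ ℓ : ℕ, ∀ i j, 0 ≤ (A ^ ℓ) i j := by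
    intro ℓ
    induction ℓ with
    | zero => intro i j; simp [Matrix.one_apply]; positivity
    | succ k ih =>
      intro i j
      rw [pow_succ, Matrix.mul_apply]
      exact Finset.sum_nonneg fun k' _ => mul_nonneg (ih i k') (hAnn k' j)
  obtain ⟨N, hN⟩ := hnil
  set f : ℕ → Matrix (Fin n) (Fin n) ℝ :=
    fun ℓ => (t ^ (α * ℓ) / Real.Gamma (α * ℓ + β)) • A ^ ℓ with hf
  have hvanish : ∀ ℓ ≥ N, f ℓ = 0 := by
    intro ℓ hℓ
    have : A ^ ℓ = 0 := by
      calc A ^ ℓ = A ^ N * A ^ (ℓ - N) := by rw [← pow_add]; congr 1; omega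
      _ = 0 := by rw [hN, Matrix.zero_mul]
    simp [hf, this]
  have hfin : ∑' ℓ, f ℓ = ∑ ℓ ∈ Finset.range N, f ℓ :=
    tsum_eq_sum (fun ℓ hℓ => hvanish ℓ (by simpa using hℓ))
  intro i j
  rw [hfin]
  have : (∑ ℓ ∈ Finset.range N, f ℓ) i j = ∑ ℓ ∈ Finset.range N, f ℓ i j := by
    exact Matrix.sum_apply i j _ _
  rw [this]
  refine Finset.sum_nonneg fun ℓ _ => ?_
  have ht' : 0 ≤ t ^ (α * ℓ) := Real.rpow_nonneg ht _
  have hg : 0 < Real.Gamma (α * ℓ + β) :=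
    Real.Gamma_pos_of_pos (by positivity)
  simp only [hf, Matrix.smul_apply, smul_eq_mul]
  exact mul_nonneg (div_nonneg ht' hg.le) (hpow ℓ i j)
end

section
/- Let A be a real n×n Metzler matrix and let α > 0, β > 0. Then there exists t̄ > 0 such that for every t ∈ [0, t̄) the Mittag-Leffler matrix function E_{α,β}(A t^α) = Σ_{ℓ=0}^∞ t^{αℓ} A^ℓ / Γ(αℓ + β) is entrywise nonnegative. -/
open Finset


lemma gamma_one_le_of_two_le {x : ℝ} (hx : 2 ≤ x) : 1 ≤ Real.Gamma x := by
  rcases eq_or_lt_of_le hx with h | h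
  · rw [← h, Real.Gamma_two]
  · have hc := Real.convexOn_Gamma
    have hx1 : (0:ℝ) < x - 1 := by linarith
    set a := (x-2)/(x-1) with ha'
    set b := 1/(x-1) with hb'
    have ha : 0 ≤ a := div_nonneg (by linarith) hx1.le
    have hb : 0 < b := by positivity
    have hab : a + b = 1 := by rw [ha', hb', ← add_div, div_eq_one_iff_eq hx1.ne']; ring
    have hcomb : a • (1:ℝ) + b • x = 2 := by
      rw [ha', hb', smul_eq_mul, smul_eq_mul, mul_one, div_mul_eq_mul_div, one_mul, ← add_div,
        div_eq_iff hx1.ne']; ring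
    have h2 := hc.2 (Set.mem_Ioi.2 one_pos) (Set.mem_Ioi.2 (by linarith : (0:ℝ) < x)) ha hb.le hab
    rw [hcomb, Real.Gamma_one, Real.Gamma_two] at h2
    -- h2 : 1 ≤ a * 1 + b * Γ x
    simp only [smul_eq_mul] at h2
    nlinarith [h2, hb, hab]

lemma exists_gammaInv_bound (α β : ℝ) (hα : 0 < α) (hβ : 0 < β) :
    ∃ M : ℝ, 1 ≤ M ∧ ∀ ℓ : ℕ, 1 / Real.Gamma (α * ℓ + β) ≤ M := by
  set N := ⌈2/α⌉₊ with hN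
  have hpos : ∀ ℓ : ℕ, 0 < Real.Gamma (α * ℓ + β) := fun ℓ =>
    Real.Gamma_pos_of_pos (by positivity)
  refine ⟨1 + ∑ ℓ ∈ range N, 1 / Real.Gamma (α * ℓ + β), ?_, ?_⟩
  · have : 0 ≤ ∑ ℓ ∈ range N, 1 / Real.Gamma (α * ℓ + β) :=
      Finset.sum_nonneg fun ℓ _ => by positivity
    linarith
  · intro ℓ
    by_cases hℓ : ℓ < N
    · have h1 : 1 / Real.Gamma (α * ℓ + β) ≤ ∑ ℓ ∈ range N, 1 / Real.Gamma (α * ℓ + β) :=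
        Finset.single_le_sum (f := fun i : ℕ => 1 / Real.Gamma (α * i + β)) (fun i _ => by positivity) (mem_range.2 hℓ)
      linarith
    · push_neg at hℓ
      have h2 : (2:ℝ) ≤ α * ℓ + β := by
        have h3 : (2/α : ℝ) ≤ N := Nat.le_ceil _
        have h4 : (N:ℝ) ≤ ℓ := Nat.cast_le.2 hℓ
        have : (2:ℝ) ≤ α * ℓ := by
          rw [div_le_iff₀ hα] at h3
          nlinarith
        linarith
      have h5 := gamma_one_le_of_two_le h2
      have : 1 / Real.Gamma (α * ℓ + β) ≤ 1 := by
        rw [div_le_one (hpos ℓ)]; exact h5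
      have hs : 0 ≤ ∑ ℓ ∈ range N, 1 / Real.Gamma (α * ℓ + β) :=
        Finset.sum_nonneg fun ℓ _ => by positivity
      linarith

lemma rpow_lt_of_lt_rpow_inv {s t α : ℝ} (hα : 0 < α) (hs : 0 < s) (ht : 0 ≤ t)
    (h : t < s ^ (α⁻¹ : ℝ)) : t ^ α < s := by
  have h2 := Real.rpow_lt_rpow ht h hα
  rwa [← Real.rpow_mul hs.le, inv_mul_cancel₀ hα.ne', Real.rpow_one] at h2

lemma key_series (α β : ℝ) (hα : 0 < α) (hβ : 0 < β) (e : ℕ → ℝ) (K : ℝ) (hK : 1 ≤ K)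
    (he : ∀ ℓ, |e ℓ| ≤ K ^ ℓ) (m0 : ℕ) (hzero : ∀ ℓ < m0, e ℓ = 0) (hpos : 0 < e m0) :
    ∃ tb : ℝ, 0 < tb ∧ ∀ t : ℝ, 0 < t → t < tb →
      0 ≤ ∑' ℓ : ℕ, t ^ (α * ℓ) / Real.Gamma (α * ℓ + β) * e ℓ := by
  obtain ⟨M, hM1, hM⟩ := exists_gammaInv_bound α β hα hβ
  have hK0 : 0 < K := lt_of_lt_of_le one_pos hK
  have hM0 : 0 < M := lt_of_lt_of_le one_pos hM1
  have hΓm0 : 0 < Real.Gamma (α * m0 + β) := Real.Gamma_pos_of_pos (by positivity)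
  set ε := e m0 / Real.Gamma (α * m0 + β) with hε
  have hεpos : 0 < ε := div_pos hpos hΓm0
  set sb := min (1/(2*K)) (ε/(2*M*K^(m0+1))) with hsb'
  have hsb : 0 < sb := lt_min (by positivity) (by positivity)
  refine ⟨sb ^ (α⁻¹ : ℝ), Real.rpow_pos_of_pos hsb _, ?_⟩
  intro t ht htb
  set s := t ^ α with hs
  have hspos : 0 < s := Real.rpow_pos_of_pos ht α
  have hstb : s < sb := rpow_lt_of_lt_rpow_inv hα hsb ht.le htb
  have hrw : ∀ ℓ : ℕ, t ^ (α * (ℓ:ℝ)) = s ^ ℓ := fun ℓ => by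
    rw [Real.rpow_mul ht.le, Real.rpow_natCast]
  have hsK : s * K ≤ 1/2 := by
    have h1 : sb ≤ 1/(2*K) := min_le_left _ _
    have h2 : s * K ≤ sb * K := mul_le_mul_of_nonneg_right hstb.le hK0.le
    have h3 : sb * K ≤ (1/(2*K)) * K := mul_le_mul_of_nonneg_right h1 hK0.le
    have h4 : (1/(2*K)) * K = 1/2 := by field_simp
    linarith
  have hsK0 : 0 ≤ s * K := by positivity
  have hsK1 : s * K < 1 := lt_of_le_of_lt hsK (by norm_num)
  set u : ℕ → ℝ := fun ℓ => s ^ ℓ / Real.Gamma (α * ℓ + β) * e ℓ with hu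
  have hΓpos : ∀ ℓ : ℕ, 0 < Real.Gamma (α * ℓ + β) := fun ℓ =>
    Real.Gamma_pos_of_pos (by positivity)
  have hub : ∀ ℓ, |u ℓ| ≤ M * (s*K) ^ ℓ := by
    intro ℓ
    have h2 : s^ℓ / Real.Gamma (α*ℓ+β) ≤ s^ℓ * M := by
      rw [div_eq_mul_inv]
      exact mul_le_mul_of_nonneg_left (by simpa [one_div] using hM ℓ) (pow_nonneg hspos.le ℓ)
    calc |u ℓ| = s^ℓ / Real.Gamma (α*ℓ+β) * |e ℓ| := by
          rw [hu, abs_mul, abs_of_pos (div_pos (pow_pos hspos ℓ) (hΓpos ℓ))]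
      _ ≤ s^ℓ * M * K^ℓ :=
          mul_le_mul h2 (he ℓ) (abs_nonneg _) (by positivity)
      _ = M * (s*K)^ℓ := by rw [mul_pow]; ring
  have hgeo : Summable (fun ℓ : ℕ => M * (s*K)^ℓ) :=
    (summable_geometric_of_lt_one hsK0 hsK1).mul_left M
  have hsum : Summable u :=
    Summable.of_norm_bounded hgeo (fun ℓ => by simpa [Real.norm_eq_abs] using hub ℓ)
  have hsplit := Summable.sum_add_tsum_nat_add (f := u) (m0+1) hsum
  have hhead : ∑ i ∈ Finset.range (m0+1), u i = s^m0 * ε := by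
    rw [Finset.sum_range_succ,
      Finset.sum_eq_zero (fun i hi => by
        simp [hu, hzero i (Finset.mem_range.1 hi)]), zero_add, hu, hε]
    ring
  -- tail bound
  have htailsum : HasSum (fun ℓ : ℕ => M * (s*K)^(m0+1) * (s*K)^ℓ)
      (M * (s*K)^(m0+1) * (1 - s*K)⁻¹) :=
    (hasSum_geometric_of_lt_one hsK0 hsK1).mul_left _
  have htail : ‖∑' ℓ : ℕ, u (ℓ + (m0+1))‖ ≤ M * (s*K)^(m0+1) * (1 - s*K)⁻¹ := by
    refine tsum_of_norm_bounded htailsum (fun ℓ => ?_)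
    rw [Real.norm_eq_abs]
    calc |u (ℓ + (m0+1))| ≤ M * (s*K)^(ℓ + (m0+1)) := hub _
      _ = M * (s*K)^(m0+1) * (s*K)^ℓ := by rw [pow_add]; ring
  have hB : M * (s*K)^(m0+1) * (1 - s*K)⁻¹ ≤ s^m0 * ε := by
    have h2 : (1 - s*K)⁻¹ ≤ 2 := by
      have h3 : (1/2 : ℝ) ≤ 1 - s*K := by linarith
      calc (1 - s*K)⁻¹ ≤ (1/2 : ℝ)⁻¹ := by
            apply inv_anti₀ (by norm_num) h3
        _ = 2 := by norm_num
    have h3 : s ≤ ε/(2*M*K^(m0+1)) := le_of_lt (lt_of_lt_of_le hstb (min_le_right _ _))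
    have h4 : s * (2*M*K^(m0+1)) ≤ ε := by
      rw [← le_div_iff₀ (by positivity)]
      exact h3
    calc M * (s*K)^(m0+1) * (1 - s*K)⁻¹ ≤ M * (s*K)^(m0+1) * 2 :=
          mul_le_mul_of_nonneg_left h2 (by positivity)
      _ = s^m0 * (s * (2*M*K^(m0+1))) := by rw [mul_pow, pow_succ]; ring
      _ ≤ s^m0 * ε := mul_le_mul_of_nonneg_left h4 (pow_nonneg hspos.le _)
  have hgoal : (0:ℝ) ≤ ∑' ℓ : ℕ, u ℓ := by
    rw [← hsplit, hhead]
    have h5 : -(M * (s*K)^(m0+1) * (1 - s*K)⁻¹) ≤ ∑' ℓ : ℕ, u (ℓ + (m0+1)) := by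
      have := abs_le.1 (by rwa [Real.norm_eq_abs] at htail)
      linarith [this.1]
    linarith
  have : (fun ℓ : ℕ => t ^ (α * (ℓ:ℝ)) / Real.Gamma (α * ℓ + β) * e ℓ) = u := by
    funext ℓ; rw [hrw ℓ]
  rw [this]
  exact hgoal

/-- If `A` is a real `n × n` Metzler matrix and `α > 0`, `β > 0`, then there
exists `t̄ > 0` such that for every `t ∈ [0, t̄)` the Mittag-Leffler matrix function
`E_{α,β}(A t^α) = Σ_{ℓ} (t^(αℓ) / Γ(αℓ + β)) • A^ℓ` is entrywise nonnegative. -/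
theorem mittagLeffler_nonneg_on_initial_interval {n : ℕ} (A : Matrix (Fin n) (Fin n) ℝ)
    (hA : A.IsMetzler) (α β : ℝ) (hα : 0 < α) (hβ : 0 < β) :
    ∃ tbar : ℝ, 0 < tbar ∧ ∀ t : ℝ, 0 ≤ t → t < tbar → ∀ i j : Fin n,
      0 ≤ (∑' ℓ : ℕ, (t ^ (α * ℓ) / Real.Gamma (α * ℓ + β)) • A ^ ℓ) i j := by
  classical
  have hΓpos : ∀ ℓ : ℕ, 0 < Real.Gamma (α * ℓ + β) := fun ℓ =>
    Real.Gamma_pos_of_pos (by positivity)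
  -- the `t = 0` case is uniform, handle it once and for all
  have hzero_case : ∀ i j : Fin n,
      0 ≤ (∑' ℓ : ℕ, ((0:ℝ) ^ (α * ℓ) / Real.Gamma (α * ℓ + β)) • A ^ ℓ) i j := by
    intro i j
    have h0 : (∑' ℓ : ℕ, ((0:ℝ) ^ (α * ℓ) / Real.Gamma (α * ℓ + β)) • A ^ ℓ)
        = ((0:ℝ) ^ (α * (0:ℕ)) / Real.Gamma (α * (0:ℕ) + β)) • A ^ 0 := by
      apply tsum_eq_single
      intro ℓ hℓ
      have : (0:ℝ) ^ (α * (ℓ:ℝ)) = 0 := by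
        apply Real.zero_rpow
        have : (0:ℝ) < (ℓ:ℝ) := by exact_mod_cast Nat.pos_of_ne_zero hℓ
        positivity
      rw [this]
      simp
    rw [h0]
    have h1 : (0:ℝ) ^ (α * ((0:ℕ):ℝ)) = 1 := by
      rw [Nat.cast_zero, mul_zero, Real.rpow_zero]
    rw [pow_zero]
    have h2 : (((0:ℝ) ^ (α * ((0:ℕ):ℝ)) / Real.Gamma (α * (0:ℕ) + β)) •
        (1 : Matrix (Fin n) (Fin n) ℝ)) i j
        = (1 / Real.Gamma (α * (0:ℕ) + β)) * (1 : Matrix (Fin n) (Fin n) ℝ) i j := by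
      rw [h1]; simp [Matrix.smul_apply]
    rw [h2]
    rcases eq_or_ne i j with h | h
    · simp [Matrix.one_apply, h]
      positivity
    · simp [Matrix.one_apply, h]
  -- entry bound constant
  set K : ℝ := 1 + ∑ i : Fin n, ∑ j : Fin n, |A i j| with hKdef
  have hsum_nonneg : 0 ≤ ∑ i : Fin n, ∑ j : Fin n, |A i j| :=
    Finset.sum_nonneg fun i _ => Finset.sum_nonneg fun j _ => abs_nonneg _
  have hK1 : 1 ≤ K := by rw [hKdef]; linarith
  have hK0 : 0 < K := lt_of_lt_of_le one_pos hK1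
  have hcol : ∀ j : Fin n, ∑ k : Fin n, |A k j| ≤ K := by
    intro j
    have h1 : ∑ k : Fin n, |A k j| ≤ ∑ k : Fin n, ∑ j' : Fin n, |A k j'| :=
      Finset.sum_le_sum fun k _ =>
        Finset.single_le_sum (f := fun j' => |A k j'|) (fun j' _ => abs_nonneg _)
          (Finset.mem_univ j)
    rw [hKdef]; linarith
  have hent : ∀ ℓ : ℕ, ∀ i j : Fin n, |(A ^ ℓ) i j| ≤ K ^ ℓ := by
    intro ℓ
    induction ℓ with
    | zero =>
      intro i j
      rw [pow_zero, pow_zero]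
      rcases eq_or_ne i j with h | h <;> simp [Matrix.one_apply, h]
    | succ ℓ ih =>
      intro i j
      rw [pow_succ, Matrix.mul_apply]
      calc |∑ k : Fin n, (A ^ ℓ) i k * A k j| ≤ ∑ k : Fin n, |(A ^ ℓ) i k * A k j| :=
            Finset.abs_sum_le_sum_abs _ _
        _ ≤ ∑ k : Fin n, K ^ ℓ * |A k j| := Finset.sum_le_sum fun k _ => by
            rw [abs_mul]
            exact mul_le_mul_of_nonneg_right (ih i k) (abs_nonneg _)
        _ = K ^ ℓ * ∑ k : Fin n, |A k j| := by rw [Finset.mul_sum]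
        _ ≤ K ^ ℓ * K := mul_le_mul_of_nonneg_left (hcol j) (pow_nonneg hK0.le _)
        _ = K ^ (ℓ+1) := (pow_succ K ℓ).symm
  -- nonnegative shift
  set c : ℝ := ∑ i : Fin n, |A i i| with hcdef
  set B : Matrix (Fin n) (Fin n) ℝ := A + c • (1 : Matrix (Fin n) (Fin n) ℝ) with hBdef
  have hc_ge : ∀ i : Fin n, |A i i| ≤ c := fun i =>
    Finset.single_le_sum (f := fun i => |A i i|) (fun i _ => abs_nonneg _) (Finset.mem_univ i)
  have hB : ∀ i j : Fin n, 0 ≤ B i j := by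
    intro i j
    rw [hBdef]
    rcases eq_or_ne i j with h | h
    · subst h
      simp only [Matrix.add_apply, Matrix.smul_apply, Matrix.one_apply_eq, smul_eq_mul, mul_one]
      have := abs_le.1 (hc_ge i)
      linarith [this.1]
    · simp only [Matrix.add_apply, Matrix.smul_apply, Matrix.one_apply_ne h, smul_eq_mul,
        mul_zero, add_zero]
      exact hA i j h
  have hBpow : ∀ m : ℕ, ∀ i j : Fin n, 0 ≤ (B ^ m) i j := by
    intro m
    induction m with
    | zero =>
      intro i j
      rw [pow_zero]
      rcases eq_or_ne i j with h | h <;> simp [Matrix.one_apply, h]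
    | succ m ih =>
      intro i j
      rw [pow_succ, Matrix.mul_apply]
      exact Finset.sum_nonneg fun k _ => mul_nonneg (ih i k) (hB k j)
  -- binomial expansion of A ^ ℓ in terms of B ^ m
  have hApow : ∀ ℓ : ℕ, A ^ ℓ =
      ∑ m ∈ Finset.range (ℓ+1), ((ℓ.choose m : ℝ) * (-c) ^ m) • B ^ (ℓ - m) := by
    intro ℓ
    have hA' : A = (-c) • (1 : Matrix (Fin n) (Fin n) ℝ) + B := by
      rw [hBdef, neg_smul]
      abel
    have hcomm : Commute ((-c) • (1 : Matrix (Fin n) (Fin n) ℝ)) B :=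
      (Commute.one_left B).smul_left (-c)
    rw [hA', hcomm.add_pow ℓ]
    apply Finset.sum_congr rfl
    intro m hm
    rw [smul_pow, one_pow, smul_mul_assoc, one_mul]
    rw [(Nat.cast_commute (ℓ.choose m) ((-c) ^ m • B ^ (ℓ - m))).symm.eq]
    rw [← nsmul_eq_mul, ← Nat.cast_smul_eq_nsmul ℝ, smul_smul]
  have hAentry : ∀ ℓ : ℕ, ∀ i j : Fin n, (A ^ ℓ) i j =
      ∑ m ∈ Finset.range (ℓ+1), ((ℓ.choose m : ℝ) * (-c) ^ m) * (B ^ (ℓ - m)) i j := by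
    intro ℓ i j
    rw [hApow ℓ, Matrix.sum_apply]
    simp [Matrix.smul_apply]
  -- per-entry initial intervals for the scalar series
  have hP : ∀ i j : Fin n, ∃ tb : ℝ, 0 < tb ∧ ∀ t : ℝ, 0 < t → t < tb →
      0 ≤ ∑' ℓ : ℕ, t ^ (α * ℓ) / Real.Gamma (α * ℓ + β) * (A ^ ℓ) i j := by
    intro i j
    by_cases hex : ∃ m : ℕ, (B ^ m) i j ≠ 0
    · set m0 := Nat.find hex with hm0def
      have hfound : (B ^ m0) i j ≠ 0 := Nat.find_spec hex
      have hbpos : 0 < (B ^ m0) i j := lt_of_le_of_ne (hBpow m0 i j) (Ne.symm hfound)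
      have hmin : ∀ m < m0, (B ^ m) i j = 0 := fun m hm => not_not.1 (Nat.find_min hex hm)
      have hzero : ∀ ℓ < m0, (A ^ ℓ) i j = 0 := by
        intro ℓ hℓ
        rw [hAentry]
        apply Finset.sum_eq_zero
        intro m _
        rw [hmin (ℓ - m) (lt_of_le_of_lt (Nat.sub_le ℓ m) hℓ), mul_zero]
      have hlead : (A ^ m0) i j = (B ^ m0) i j := by
        rw [hAentry,
          Finset.sum_eq_single_of_mem 0 (Finset.mem_range.2 (Nat.succ_pos m0))
            (fun m hm hm0' => by
              have hm1 : 1 ≤ m := Nat.one_le_iff_ne_zero.2 hm0'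
              have hmle : m ≤ m0 := Nat.lt_succ_iff.1 (Finset.mem_range.1 hm)
              rw [hmin _ (Nat.sub_lt (lt_of_lt_of_le hm1 hmle) hm1), mul_zero])]
        simp
      exact key_series α β hα hβ (fun ℓ => (A ^ ℓ) i j) K hK1
        (fun ℓ => hent ℓ i j) m0 hzero (by show 0 < (A ^ m0) i j; rw [hlead]; exact hbpos)
    · push_neg at hex
      refine ⟨1, one_pos, fun t ht htb => ?_⟩
      have hz : ∀ ℓ : ℕ, (A ^ ℓ) i j = 0 := by
        intro ℓ
        rw [hAentry]
        exact Finset.sum_eq_zero fun m _ => by rw [hex (ℓ - m), mul_zero]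
      have hfz : (fun ℓ : ℕ => t ^ (α * ℓ) / Real.Gamma (α * ℓ + β) * (A ^ ℓ) i j)
          = fun _ => (0:ℝ) := by
        funext ℓ; rw [hz ℓ, mul_zero]
      rw [hfz, tsum_zero]
  choose T hT0 hT using hP
  rcases Nat.eq_zero_or_pos n with hn | hn
  · subst hn
    exact ⟨1, one_pos, fun t _ _ i j => i.elim0⟩
  have hne : (Finset.univ : Finset (Fin n × Fin n)).Nonempty :=
    ⟨(⟨0, hn⟩, ⟨0, hn⟩), Finset.mem_univ _⟩
  set cap : ℝ := (1/(2*K)) ^ (α⁻¹ : ℝ) with hcap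
  set tb2 := Finset.univ.inf' hne (fun p : Fin n × Fin n => T p.1 p.2) with htb2
  refine ⟨min cap tb2, lt_min (Real.rpow_pos_of_pos (by positivity) _)
    ((Finset.lt_inf'_iff hne).2 fun p _ => hT0 p.1 p.2), ?_⟩
  intro t ht htlt i j
  rcases eq_or_lt_of_le ht with rfl | htpos
  · exact hzero_case i j
  have htcap : t < cap := lt_of_lt_of_le htlt (min_le_left _ _)
  have hsK : t ^ α * K < 1 := by
    have h1 : t ^ α < 1/(2*K) := rpow_lt_of_lt_rpow_inv hα (by positivity) ht htcap
    have h2 : t ^ α * K < (1/(2*K)) * K := mul_lt_mul_of_pos_right h1 hK0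
    have h3 : (1/(2*K)) * K = 1/2 := by field_simp
    rw [h3] at h2
    exact lt_trans h2 (by norm_num)
  have htα : (0:ℝ) ≤ t ^ α := (Real.rpow_pos_of_pos htpos α).le
  obtain ⟨M, hM1, hM⟩ := exists_gammaInv_bound α β hα hβ
  have hentsum : ∀ i' j' : Fin n, Summable (fun ℓ : ℕ =>
      (t ^ (α * ℓ) / Real.Gamma (α * ℓ + β)) * (A ^ ℓ) i' j') := by
    intro i' j'
    apply Summable.of_norm_bounded
      ((summable_geometric_of_lt_one (by positivity) hsK).mul_left M)
    intro ℓ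
    rw [Real.norm_eq_abs, abs_mul]
    have hrw : t ^ (α * (ℓ:ℝ)) = (t ^ α) ^ ℓ := by
      rw [Real.rpow_mul ht, Real.rpow_natCast]
    have habs1 : |t ^ (α * (ℓ:ℝ)) / Real.Gamma (α * ℓ + β)| ≤ (t ^ α) ^ ℓ * M := by
      rw [hrw, abs_of_pos (div_pos (pow_pos (Real.rpow_pos_of_pos htpos α) ℓ) (hΓpos ℓ)),
        div_eq_mul_inv]
      exact mul_le_mul_of_nonneg_left (by simpa [one_div] using hM ℓ)
        (pow_nonneg htα ℓ)
    calc |t ^ (α * (ℓ:ℝ)) / Real.Gamma (α * ℓ + β)| * |(A ^ ℓ) i' j'|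
        ≤ ((t ^ α) ^ ℓ * M) * K ^ ℓ :=
          mul_le_mul habs1 (hent ℓ i' j') (abs_nonneg _) (by positivity)
      _ = M * (t ^ α * K) ^ ℓ := by rw [mul_pow]; ring
  have hmatsum : Summable (fun ℓ : ℕ => (t ^ (α * ℓ) / Real.Gamma (α * ℓ + β)) • A ^ ℓ) := by
    refine Pi.summable.2 ?_
    intro i'
    rw [Pi.summable]
    intro j'
    have hfe : (fun ℓ : ℕ => ((t ^ (α * ℓ) / Real.Gamma (α * ℓ + β)) • A ^ ℓ) i' j')
        = fun ℓ : ℕ => (t ^ (α * ℓ) / Real.Gamma (α * ℓ + β)) * (A ^ ℓ) i' j' := by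
      funext ℓ
      simp [Matrix.smul_apply]
    rw [hfe]
    exact hentsum i' j'
  have hrowsum : Summable (fun ℓ : ℕ => ((t ^ (α * ℓ) / Real.Gamma (α * ℓ + β)) • A ^ ℓ) i) := by
    rw [Pi.summable]
    intro j'
    have hfe : (fun ℓ : ℕ => ((t ^ (α * ℓ) / Real.Gamma (α * ℓ + β)) • A ^ ℓ) i j')
        = fun ℓ : ℕ => (t ^ (α * ℓ) / Real.Gamma (α * ℓ + β)) * (A ^ ℓ) i j' := by
      funext ℓ
      simp [Matrix.smul_apply]
    rw [hfe]
    exact hentsum i j'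
  have heq : (∑' ℓ : ℕ, (t ^ (α * ℓ) / Real.Gamma (α * ℓ + β)) • A ^ ℓ) i j
      = ∑' ℓ : ℕ, t ^ (α * ℓ) / Real.Gamma (α * ℓ + β) * (A ^ ℓ) i j := by
    rw [show (∑' ℓ : ℕ, (t ^ (α * ℓ) / Real.Gamma (α * ℓ + β)) • A ^ ℓ) i j
        = ∑' ℓ : ℕ, ((t ^ (α * ℓ) / Real.Gamma (α * ℓ + β)) • A ^ ℓ) i j from
      (congrFun (tsum_apply hmatsum) j).trans (tsum_apply hrowsum)]
    apply tsum_congr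
    intro ℓ
    simp [Matrix.smul_apply]
  rw [heq]
  exact hT i j t htpos (lt_of_lt_of_le htlt (le_trans (min_le_right _ _)
    (Finset.inf'_le _ (Finset.mem_univ (i, j)))))
end

section
/- Consider the linear time-invariant delay system with delays 0 = h₀ < h₁ < ⋯ < h_p = h, matrices A₀, …, A_p ∈ ℝ^{n×n} and B ∈ ℝ^{n×m}. Assume A₀ is Metzler, A₁, …, A_p are entrywise nonnegative, and B is entrywise nonnegative. Let φ : [−h, 0] → ℝⁿ be continuous with φ(t) ≥ 0 componentwise for all t ∈ [−h, 0], let u : [0, ∞) → ℝ^m be continuous with u(t) ≥ 0 componentwise for all t ≥ 0, and let x be a solution of the delay system with initial function φ and input u. Then x(t) ≥ 0 componentwise for every t ≥ 0. -/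
open Matrix intervalIntegral

/-- `IsDelaySolution hd A B φ u x` : `x : [-h, ∞) → ℝⁿ` is a solution of the delay system
`ẋ(t) = Σ_{i=0}^p A_i x(t - h_i) + B u(t)` with delays `hd 0 < hd 1 < ⋯ < hd p = h`,
initial function `φ` on `[-h, 0]` and input `u`, in the integrated (mild) sense. -/
def IsDelaySolution {n m p : ℕ} (hd : Fin (p + 1) → ℝ)
    (A : Fin (p + 1) → Matrix (Fin n) (Fin n) ℝ) (B : Matrix (Fin n) (Fin m) ℝ)
    (φ : ℝ → Fin n → ℝ) (u : ℝ → Fin m → ℝ) (x : ℝ → Fin n → ℝ) : Prop :=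
  ContinuousOn x (Set.Ici (-(hd (Fin.last p)))) ∧
    (∀ s ∈ Set.Icc (-(hd (Fin.last p))) 0, x s = φ s) ∧
    ∀ t : ℝ, 0 ≤ t →
      x t = x 0 + ∫ τ in (0 : ℝ)..t,
        ((∑ i : Fin (p + 1), (A i) *ᵥ x (τ - hd i)) + B *ᵥ u τ)

/-- Extracting a component of an interval integral of a `Fin n → ℝ` valued function. -/
lemma intervalIntegral_pi_apply {n : ℕ} {g : ℝ → Fin n → ℝ} {a b : ℝ}
    (hg : IntervalIntegrable g MeasureTheory.volume a b) (k : Fin n) :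
    (∫ τ in a..b, g τ) k = ∫ τ in a..b, g τ k := by
  have := (ContinuousLinearMap.proj (R := ℝ)
    (φ := fun _ : Fin n => ℝ) k).intervalIntegral_comp_comm hg
  simpa using this.symm

/-- For the delay system with `A₀` Metzler, `A₁, …, A_p` entrywise nonnegative
and `B` entrywise nonnegative, every solution with componentwise nonnegative continuous initial
function and componentwise nonnegative continuous input is componentwise nonnegative for all
`t ≥ 0`. -/
theorem delay_solution_nonneg {n m p : ℕ} (hd : Fin (p + 1) → ℝ)
    (hd0 : hd 0 = 0) (hdmono : StrictMono hd)
    (A : Fin (p + 1) → Matrix (Fin n) (Fin n) ℝ) (B : Matrix (Fin n) (Fin m) ℝ)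
    (hA0 : (A 0).IsMetzler)
    (hAi : ∀ i : Fin (p + 1), i ≠ 0 → ∀ k j : Fin n, 0 ≤ A i k j)
    (hB : ∀ k : Fin n, ∀ j : Fin m, 0 ≤ B k j)
    (φ : ℝ → Fin n → ℝ)
    (hφc : ContinuousOn φ (Set.Icc (-(hd (Fin.last p))) 0))
    (hφ : ∀ s ∈ Set.Icc (-(hd (Fin.last p))) 0, ∀ k : Fin n, 0 ≤ φ s k)
    (u : ℝ → Fin m → ℝ)
    (huc : ContinuousOn u (Set.Ici 0))
    (hu : ∀ t : ℝ, 0 ≤ t → ∀ j : Fin m, 0 ≤ u t j)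
    (x : ℝ → Fin n → ℝ)
    (hx : IsDelaySolution hd A B φ u x) :
    ∀ t : ℝ, 0 ≤ t → ∀ k : Fin n, 0 ≤ x t k := by
  obtain ⟨hxc, hxφ, hxeq⟩ := hx
  set h : ℝ := hd (Fin.last p) with hh
  have hdnn : ∀ i, 0 ≤ hd i := fun i => hd0 ▸ hdmono.monotone (Fin.zero_le i)
  have hdle : ∀ i, hd i ≤ h := fun i => hdmono.monotone (Fin.le_last i)
  have hh0 : 0 ≤ h := hdnn _
  have hsub0 : Set.Ici (0:ℝ) ⊆ Set.Ici (-h) := fun z hz => le_trans (by linarith : -h ≤ 0) hz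
  -- the integrand
  set g : ℝ → Fin n → ℝ :=
    fun τ => (∑ i : Fin (p + 1), (A i) *ᵥ x (τ - hd i)) + B *ᵥ u τ with hg
  -- continuity of the integrand on [0, ∞)
  have hgc : ContinuousOn g (Set.Ici 0) := by
    apply ContinuousOn.add
    · apply continuousOn_finset_sum
      intro i _
      have h1 : Continuous fun v : Fin n → ℝ => A i *ᵥ v :=
        (Matrix.mulVecLin (A i)).continuous_of_finiteDimensional
      exact h1.comp_continuousOn ((hxc.comp (continuous_sub_right (hd i)).continuousOn)
        (fun τ hτ => by
          simp only [Set.mem_Ici] at *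
          have := hdle i
          linarith))
    · have h1 : Continuous fun v : Fin m → ℝ => B *ᵥ v :=
        (Matrix.mulVecLin B).continuous_of_finiteDimensional
      exact h1.comp_continuousOn huc
  have hgkc : ∀ k : Fin n, ContinuousOn (fun τ => g τ k) (Set.Ici 0) :=
    fun k => (continuous_apply k).comp_continuousOn hgc
  -- interval integrability
  have hgint : ∀ a b : ℝ, 0 ≤ a → 0 ≤ b →
      IntervalIntegrable g MeasureTheory.volume a b := by
    intro a b ha hb
    apply (hgc.mono ?_).intervalIntegrable
    intro z hz
    rcases Set.mem_uIcc.1 hz with ⟨h1, _⟩ | ⟨h1, _⟩ <;> simp only [Set.mem_Ici] <;> linarith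
  have hgkint : ∀ (k : Fin n) (a b : ℝ), 0 ≤ a → 0 ≤ b →
      IntervalIntegrable (fun τ => g τ k) MeasureTheory.volume a b := by
    intro k a b ha hb
    apply ((hgkc k).mono ?_).intervalIntegrable
    intro z hz
    rcases Set.mem_uIcc.1 hz with ⟨h1, _⟩ | ⟨h1, _⟩ <;> simp only [Set.mem_Ici] <;> linarith
  -- componentwise integral equation
  have hxk : ∀ t : ℝ, 0 ≤ t → ∀ k : Fin n,
      x t k = x 0 k + ∫ τ in (0:ℝ)..t, g τ k := by
    intro t ht k
    have := congrFun (hxeq t ht) k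
    rw [this, Pi.add_apply, intervalIntegral_pi_apply (hgint 0 t le_rfl ht) k]
  -- initial nonnegativity
  have hx0 : ∀ s ∈ Set.Icc (-h) 0, ∀ j, 0 ≤ x s j := by
    intro s hs j
    rw [hxφ s hs]
    exact hφ s hs j
  -- the constant M
  set M : ℝ := 1 + ∑ i : Fin (p+1), ∑ k : Fin n, ∑ j : Fin n, |A i k j| with hM
  have hM1 : 1 ≤ M := by
    have : (0:ℝ) ≤ ∑ i : Fin (p+1), ∑ k : Fin n, ∑ j : Fin n, |A i k j| :=
      Finset.sum_nonneg fun i _ => Finset.sum_nonneg fun k _ =>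
        Finset.sum_nonneg fun j _ => abs_nonneg _
    linarith
  have hMpos : (0:ℝ) < M := by linarith
  have hrow : ∀ k : Fin n, (∑ i : Fin (p+1), ∑ j : Fin n, |A i k j|) ≤ M - 1 := by
    intro k
    have : ∀ i : Fin (p+1), (∑ j : Fin n, |A i k j|) ≤ ∑ k' : Fin n, ∑ j : Fin n, |A i k' j| := by
      intro i
      exact Finset.single_le_sum (f := fun k' => ∑ j : Fin n, |A i k' j|)
        (fun k' _ => Finset.sum_nonneg fun j _ => abs_nonneg _) (Finset.mem_univ k)
    calc (∑ i : Fin (p+1), ∑ j : Fin n, |A i k j|)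
        ≤ ∑ i : Fin (p+1), ∑ k' : Fin n, ∑ j : Fin n, |A i k' j| :=
          Finset.sum_le_sum fun i _ => this i
      _ = M - 1 := by rw [hM]; ring
  -- key perturbation claim
  have key : ∀ ε : ℝ, 0 < ε → ∀ t : ℝ, 0 ≤ t → ∀ k : Fin n,
      -(ε * Real.exp (M * t)) < x t k := by
    intro ε hε
    by_contra hcon
    push_neg at hcon
    obtain ⟨t₁, ht₁, k₁, hk₁⟩ := hcon
    set Bad : Set ℝ := {t | 0 ≤ t ∧ ∃ k, x t k + ε * Real.exp (M * t) ≤ 0} with hBad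
    have hBadne : Bad.Nonempty := ⟨t₁, ht₁, k₁, by linarith⟩
    have hBadbdd : BddBelow Bad := ⟨0, fun t ht => ht.1⟩
    have hxkc : ∀ j : Fin n, ContinuousOn (fun t => x t j + ε * Real.exp (M * t))
        (Set.Ici 0) := by
      intro j
      have hc : Continuous fun t : ℝ => ε * Real.exp (M * t) :=
        continuous_const.mul (Real.continuous_exp.comp (continuous_const.mul continuous_id))
      exact (((continuous_apply j).comp_continuousOn (hxc.mono hsub0))).add hc.continuousOn
    have hBadclosed : IsClosed Bad := by
      have : Bad = ⋃ j : Fin n,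
          (Set.Ici 0 ∩ (fun t => x t j + ε * Real.exp (M * t)) ⁻¹' Set.Iic 0) := by
        ext t
        simp only [hBad, Set.mem_setOf_eq, Set.mem_iUnion, Set.mem_inter_iff, Set.mem_Ici,
          Set.mem_preimage, Set.mem_Iic]
        constructor
        · rintro ⟨h1, j, h2⟩; exact ⟨j, h1, h2⟩
        · rintro ⟨j, h1, h2⟩; exact ⟨h1, j, h2⟩
      rw [this]
      exact isClosed_iUnion_of_finite fun j =>
        (hxkc j).preimage_isClosed_of_isClosed isClosed_Ici isClosed_Iic
    set T : ℝ := sInf Bad with hT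
    have hTmem : T ∈ Bad := hBadclosed.csInf_mem hBadne hBadbdd
    obtain ⟨hT0, k, hkT⟩ := hTmem
    have h0mem : (0:ℝ) ∈ Set.Icc (-h) (0:ℝ) := ⟨by linarith, le_rfl⟩
    have hTpos : 0 < T := by
      rcases lt_or_eq_of_le hT0 with h1 | h1
      · exact h1
      · exfalso
        rw [← h1] at hkT
        have := hx0 0 h0mem k
        simp only [mul_zero, Real.exp_zero, mul_one] at hkT
        linarith
    -- all components satisfy the lower bound on [0, T]
    have hgood : ∀ τ ∈ Set.Icc (0:ℝ) T, ∀ j, -(ε * Real.exp (M * τ)) ≤ x τ j := by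
      have hGc : IsClosed (⋂ j : Fin n,
          (Set.Icc (0:ℝ) T ∩ (fun t => x t j + ε * Real.exp (M * t)) ⁻¹' Set.Ici 0)) :=
        isClosed_iInter fun j =>
          ((hxkc j).mono Set.Icc_subset_Ici_self).preimage_isClosed_of_isClosed
            isClosed_Icc isClosed_Ici
      have hsubG : Set.Ico (0:ℝ) T ⊆ ⋂ j : Fin n,
          (Set.Icc (0:ℝ) T ∩ (fun t => x t j + ε * Real.exp (M * t)) ⁻¹' Set.Ici 0) := by
        intro τ hτ
        have hτBad : τ ∉ Bad := fun hmem => absurd (csInf_le hBadbdd hmem) (not_le.2 hτ.2)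
        simp only [hBad, Set.mem_setOf_eq, not_and, not_exists, not_le] at hτBad
        refine Set.mem_iInter.2 fun j => ⟨⟨hτ.1, hτ.2.le⟩, ?_⟩
        have := hτBad hτ.1 j
        simp only [Set.mem_preimage, Set.mem_Ici]
        linarith
      have : Set.Icc (0:ℝ) T ⊆ ⋂ j : Fin n,
          (Set.Icc (0:ℝ) T ∩ (fun t => x t j + ε * Real.exp (M * t)) ⁻¹' Set.Ici 0) := by
        have h1 := closure_minimal hsubG hGc
        rwa [closure_Ico hTpos.ne] at h1
      intro τ hτ j
      have := Set.mem_iInter.1 (this hτ) j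
      simp only [Set.mem_inter_iff, Set.mem_preimage, Set.mem_Ici] at this
      linarith [this.2]
    -- lower bound for delayed arguments
    have hdelay : ∀ τ ∈ Set.Icc (0:ℝ) T, ∀ i : Fin (p+1), ∀ j,
        -(ε * Real.exp (M * τ)) ≤ x (τ - hd i) j := by
      intro τ hτ i j
      by_cases h0 : 0 ≤ τ - hd i
      · have h1 : τ - hd i ∈ Set.Icc (0:ℝ) T := ⟨h0, by have := hdnn i; linarith [hτ.2]⟩
        have h2 := hgood _ h1 j
        have h3 : Real.exp (M * (τ - hd i)) ≤ Real.exp (M * τ) := by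
          apply Real.exp_le_exp.2
          have := hdnn i
          nlinarith
        nlinarith
      · have h1 : τ - hd i ∈ Set.Icc (-h) 0 := ⟨by have := hdle i; linarith [hτ.1], by linarith⟩
        have h2 := hx0 _ h1 j
        have : 0 < ε * Real.exp (M * τ) := mul_pos hε (Real.exp_pos _)
        linarith
    -- last time before T where component k was nonnegative
    set S : Set ℝ := {s | s ∈ Set.Icc (0:ℝ) T ∧ 0 ≤ x s k} with hS
    have hSclosed : IsClosed S := by
      have : S = Set.Icc (0:ℝ) T ∩ (fun t => x t k) ⁻¹' Set.Ici 0 := rfl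
      rw [this]
      exact (((continuous_apply k).comp_continuousOn
        (hxc.mono (fun z hz => hsub0 (Set.Icc_subset_Ici_self hz))))).preimage_isClosed_of_isClosed
        isClosed_Icc isClosed_Ici
    have hSne : S.Nonempty := ⟨0, ⟨le_rfl, hTpos.le⟩, hx0 0 h0mem k⟩
    have hSbdd : BddAbove S := ⟨T, fun s hs => hs.1.2⟩
    set s₀ : ℝ := sSup S with hs₀
    have hs₀mem : s₀ ∈ S := hSclosed.csSup_mem hSne hSbdd
    have hs₀0 : 0 ≤ s₀ := hs₀mem.1.1
    have hs₀T : s₀ ≤ T := hs₀mem.1.2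
    have hxs₀ : 0 ≤ x s₀ k := hs₀mem.2
    -- component k is nonpositive on (s₀, T]
    have hneg : ∀ τ ∈ Set.Ioc s₀ T, x τ k ≤ 0 := by
      intro τ hτ
      by_contra hpos
      push_neg at hpos
      have : τ ∈ S := ⟨⟨le_trans hs₀0 hτ.1.le, hτ.2⟩, hpos.le⟩
      exact absurd (le_csSup hSbdd this) (not_le.2 hτ.1)
    -- pointwise lower bound on the integrand
    have hbound : ∀ τ ∈ Set.Ioc s₀ T,
        -((M - 1) * (ε * Real.exp (M * τ))) ≤ g τ k := by
      intro τ hτ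
      have hτ0 : 0 ≤ τ := le_trans hs₀0 hτ.1.le
      have hτIcc : τ ∈ Set.Icc (0:ℝ) T := ⟨hτ0, hτ.2⟩
      have hE : (0:ℝ) < ε * Real.exp (M * τ) := mul_pos hε (Real.exp_pos _)
      have hgapp : g τ k = (∑ i : Fin (p+1), ∑ j, A i k j * x (τ - hd i) j)
          + ∑ j, B k j * u τ j := by
        simp [hg, Matrix.mulVec, dotProduct, Finset.sum_apply]
      rw [hgapp]
      have hBu : 0 ≤ ∑ j, B k j * u τ j :=
        Finset.sum_nonneg fun j _ => mul_nonneg (hB k j) (hu τ hτ0 j)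
      have hterm : ∀ i : Fin (p+1), ∀ j : Fin n,
          -(|A i k j| * (ε * Real.exp (M * τ))) ≤ A i k j * x (τ - hd i) j := by
        intro i j
        by_cases hij : i = 0 ∧ j = k
        · obtain ⟨hi, hjk⟩ := hij
          subst hi; subst hjk
          rw [hd0, sub_zero]
          have hlb := hgood τ hτIcc j
          have hub := hneg τ hτ
          have habs : |x τ j| ≤ ε * Real.exp (M * τ) := abs_le.2 ⟨by linarith, by linarith⟩
          calc -(|A 0 j j| * (ε * Real.exp (M * τ)))
              ≤ -(|A 0 j j| * |x τ j|) := by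
                have := mul_le_mul_of_nonneg_left habs (abs_nonneg (A 0 j j))
                linarith
            _ = -|A 0 j j * x τ j| := by rw [abs_mul]
            _ ≤ A 0 j j * x τ j := neg_abs_le _
        · have hApos : 0 ≤ A i k j := by
            by_cases hi : i = 0
            · subst hi
              have hjk : j ≠ k := fun hjk => hij ⟨rfl, hjk⟩
              exact hA0 k j (Ne.symm hjk)
            · exact hAi i hi k j
          have hxlb := hdelay τ hτIcc i j
          calc -(|A i k j| * (ε * Real.exp (M * τ)))
              = -(A i k j * (ε * Real.exp (M * τ))) := by rw [abs_of_nonneg hApos]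
            _ = A i k j * (-(ε * Real.exp (M * τ))) := by ring
            _ ≤ A i k j * x (τ - hd i) j := mul_le_mul_of_nonneg_left hxlb hApos
      have hsum : -((∑ i : Fin (p+1), ∑ j, |A i k j|) * (ε * Real.exp (M * τ)))
          ≤ ∑ i : Fin (p+1), ∑ j, A i k j * x (τ - hd i) j := by
        have h1 : ∑ i : Fin (p+1), ∑ j, -(|A i k j| * (ε * Real.exp (M * τ)))
            ≤ ∑ i : Fin (p+1), ∑ j, A i k j * x (τ - hd i) j :=
          Finset.sum_le_sum fun i _ => Finset.sum_le_sum fun j _ => hterm i j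
        calc -((∑ i : Fin (p+1), ∑ j, |A i k j|) * (ε * Real.exp (M * τ)))
            = ∑ i : Fin (p+1), ∑ j, -(|A i k j| * (ε * Real.exp (M * τ))) := by
              simp [Finset.sum_mul, Finset.sum_neg_distrib]
          _ ≤ _ := h1
      have hfin : -((M - 1) * (ε * Real.exp (M * τ)))
          ≤ -((∑ i : Fin (p+1), ∑ j, |A i k j|) * (ε * Real.exp (M * τ))) := by
        have := mul_le_mul_of_nonneg_right (hrow k) hE.le
        linarith
      linarith
    -- integral equation between s₀ and T
    have hs₀eq := hxk s₀ hs₀0 k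
    have hTeq := hxk T hTpos.le k
    have hadd : (∫ τ in (0:ℝ)..s₀, g τ k) + (∫ τ in s₀..T, g τ k)
        = ∫ τ in (0:ℝ)..T, g τ k :=
      intervalIntegral.integral_add_adjacent_intervals
        (hgkint k 0 s₀ le_rfl hs₀0) (hgkint k s₀ T hs₀0 hTpos.le)
    have hxT : x T k = x s₀ k + ∫ τ in s₀..T, g τ k := by linarith
    -- lower bound for the integral
    have hmono : (∫ τ in s₀..T, -((M - 1) * (ε * Real.exp (M * τ))))
        ≤ ∫ τ in s₀..T, g τ k := by
      rw [intervalIntegral.integral_of_le hs₀T, intervalIntegral.integral_of_le hs₀T]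
      apply MeasureTheory.setIntegral_mono_on
      · apply Continuous.integrableOn_Ioc
        fun_prop
      · exact (hgkint k s₀ T hs₀0 hTpos.le).1
      · exact measurableSet_Ioc
      · exact hbound
    have hval : (∫ τ in s₀..T, -((M - 1) * (ε * Real.exp (M * τ))))
        = -((M - 1) * ε * ((Real.exp (M * T) - Real.exp (M * s₀)) / M)) := by
      have h1 : ∫ τ in s₀..T, Real.exp (M * τ)
          = (Real.exp (M * T) - Real.exp (M * s₀)) / M := by
        rw [intervalIntegral.integral_comp_mul_left (fun y => Real.exp y) (ne_of_gt hMpos),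
          integral_exp, smul_eq_mul]
        ring
      rw [intervalIntegral.integral_neg]
      have h2 : ∫ τ in s₀..T, (M - 1) * (ε * Real.exp (M * τ))
          = (M - 1) * ε * ((Real.exp (M * T) - Real.exp (M * s₀)) / M) := by
        rw [show (fun τ => (M - 1) * (ε * Real.exp (M * τ)))
            = fun τ => ((M - 1) * ε) * Real.exp (M * τ) by funext τ; ring]
        rw [intervalIntegral.integral_const_mul, h1]
      rw [h2]
    -- final contradiction
    set E : ℝ := Real.exp (M * T) with hE
    set F : ℝ := Real.exp (M * s₀) with hF
    have hFpos : 0 < F := Real.exp_pos _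
    have hEpos : 0 < E := Real.exp_pos _
    have hFE : F ≤ E := Real.exp_le_exp.2 (by nlinarith)
    have hdiv : (M - 1) * ε * ((E - F) / M) ≤ ε * (E - F) := by
      have h1 : (M - 1) * ε * ((E - F) / M) = ((M - 1) / M) * (ε * (E - F)) := by ring
      have h2 : (M - 1) / M ≤ 1 := (div_le_one hMpos).2 (by linarith)
      have h3 : 0 ≤ ε * (E - F) := mul_nonneg hε.le (by linarith)
      rw [h1]
      exact mul_le_of_le_one_left h3 h2
    have hxTlb : x s₀ k - ε * (E - F) ≤ x T k := by
      rw [hxT]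
      linarith [le_trans (by linarith [hdiv] : -(ε * (E - F)) ≤
        -((M - 1) * ε * ((E - F) / M))) (hval ▸ hmono)]
    have : x T k + ε * E ≤ 0 := hkT
    nlinarith [mul_pos hε hFpos]
  -- conclude
  intro t ht k
  by_contra hneg
  push_neg at hneg
  have hε : 0 < -(x t k) / Real.exp (M * t) :=
    div_pos (neg_pos.2 hneg) (Real.exp_pos _)
  have := key _ hε t ht k
  rw [div_mul_cancel₀] at this
  · linarith
  · exact ne_of_gt (Real.exp_pos _)
end

section
/- Consider the unforced linear time-invariant delay system with delays 0 = h₀ < h₁ < ⋯ < h_p = h and matrices A₀, …, A_p ∈ ℝ^{n×n}. Let μ₂(A₀) := (1/2)·λ_max(A₀ + A₀ᵀ) and suppose μ₂(A₀) < 0 and that there exist real numbers β₁, …, β_p > 0 with Σ_{i=1}^p β_i² = 1 such that the n×(pn) block-row matrix [ (1/β₁) A₁, (1/β₂) A₂, …, (1/β_p) A_p ] has ℓ₂ operator norm strictly smaller than |μ₂(A₀)|. Then for every continuous initial function φ : [−h, 0] → ℝⁿ, every solution x of the unforced delay system with initial function φ satisfies x(t) → 0 as t → ∞; i.e. the system is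 globally asymptotically Lyapunov stable independent of the delays. -/
open Matrix intervalIntegral

open scoped Matrix.Norms.L2Operator

open scoped Topology

/-- `IsUnforcedDelaySolution hd A φ x` : `x : [-h, ∞) → ℝⁿ` is a solution of the unforced delay
system `ẋ(t) = Σ_{i=0}^p A_i x(t - h_i)` with delays `hd 0 < hd 1 < ⋯ < hd p = h` and initial
function `φ` on `[-h, 0]`, in the integrated (mild) sense. -/
def IsUnforcedDelaySolution {n p : ℕ} (hd : Fin (p + 1) → ℝ)
    (A : Fin (p + 1) → Matrix (Fin n) (Fin n) ℝ)
    (φ : ℝ → Fin n → ℝ) (x : ℝ → Fin n → ℝ) : Prop :=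
  ContinuousOn x (Set.Ici (-(hd (Fin.last p)))) ∧
    (∀ s ∈ Set.Icc (-(hd (Fin.last p))) 0, x s = φ s) ∧
    ∀ t : ℝ, 0 ≤ t →
      x t = x 0 + ∫ τ in (0 : ℝ)..t, ∑ i : Fin (p + 1), (A i) *ᵥ x (τ - hd i)

namespace DelayAux

lemma vecMul_eq_star_mulVec {n : ℕ} (U : Matrix (Fin n) (Fin n) ℝ) (v : Fin n → ℝ) :
    v ᵥ* U = star U *ᵥ v := by
  ext j
  simp [vecMul, mulVec, dotProduct, conjTranspose, mul_comm]

lemma rayleigh_le {n : ℕ} {M : Matrix (Fin n) (Fin n) ℝ} (hM : M.IsHermitian) (v : Fin n → ℝ) :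
    v ⬝ᵥ M *ᵥ v ≤ (⨆ i, hM.eigenvalues i) * (v ⬝ᵥ v) := by
  set U : Matrix (Fin n) (Fin n) ℝ :=
    (Matrix.IsHermitian.eigenvectorUnitary hM : Matrix (Fin n) (Fin n) ℝ) with hU
  set w : Fin n → ℝ := star U *ᵥ v with hw
  have hvw : v ⬝ᵥ v = w ⬝ᵥ w := by
    rw [hw, ← vecMul_eq_star_mulVec, ← dotProduct_mulVec, vecMul_eq_star_mulVec, mulVec_mulVec,
      (Matrix.mem_unitaryGroup_iff).mp (Matrix.IsHermitian.eigenvectorUnitary hM).2, one_mulVec]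
  have hMv : v ⬝ᵥ M *ᵥ v = ∑ j, hM.eigenvalues j * (w j)^2 := by
    conv_lhs => rw [hM.spectral_theorem, Unitary.conjStarAlgAut_apply]
    rw [← mulVec_mulVec, ← mulVec_mulVec, dotProduct_mulVec, vecMul_eq_star_mulVec, ← hw]
    simp only [mulVec_diagonal, dotProduct, Function.comp_apply, RCLike.ofReal_real_eq_id, id_eq]
    exact Finset.sum_congr rfl fun j _ => by ring
  rw [hMv, hvw]
  have hb : BddAbove (Set.range hM.eigenvalues) := Set.Finite.bddAbove (Set.finite_range _)
  calc ∑ j, hM.eigenvalues j * (w j)^2 ≤ ∑ j, (⨆ i, hM.eigenvalues i) * (w j)^2 := by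
        apply Finset.sum_le_sum
        intro j _
        exact mul_le_mul_of_nonneg_right (le_ciSup hb j) (sq_nonneg _)
    _ = (⨆ i, hM.eigenvalues i) * (w ⬝ᵥ w) := by
        rw [← Finset.mul_sum]; simp [dotProduct, sq]

lemma euclid_inner_eq {ι : Type*} [Fintype ι] (u v : ι → ℝ) :
    (inner ℝ ((EuclideanSpace.equiv ι ℝ).symm u) ((EuclideanSpace.equiv ι ℝ).symm v) : ℝ)
      = u ⬝ᵥ v := by
  simp [PiLp.inner_apply, dotProduct, RCLike.inner_apply, conj_trivial]
  exact Finset.sum_congr rfl fun i _ => mul_comm _ _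

lemma euclid_norm_sq {ι : Type*} [Fintype ι] (u : ι → ℝ) :
    ‖(EuclideanSpace.equiv ι ℝ).symm u‖ ^ 2 = u ⬝ᵥ u := by
  rw [← real_inner_self_eq_norm_sq, euclid_inner_eq]

lemma no_deriv_neg_of_pos_right {g : ℝ → ℝ} {t₀ d : ℝ} {S : Set ℝ}
    (hg : HasDerivAt g d t₀) (hd : d < 0) (h0 : g t₀ = 0)
    (hS : ∀ s ∈ S, t₀ < s ∧ 0 < g s) (hcl : t₀ ∈ closure S) : False := by
  have hne : (𝓝[S] t₀).NeBot := mem_closure_iff_nhdsWithin_neBot.mp hcl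
  have hsub : S ⊆ {t | t ≠ t₀} := fun s hs => (hS s hs).1.ne'
  have htend : Filter.Tendsto (slope g t₀) (𝓝[S] t₀) (𝓝 d) :=
    (hasDerivAt_iff_tendsto_slope.mp hg).mono_left (nhdsWithin_mono _ hsub)
  have hpos : ∀ᶠ s in 𝓝[S] t₀, 0 ≤ slope g t₀ s :=
    eventually_mem_nhdsWithin.mono (fun s hs => by
      have h1 := (hS s hs).1
      have h2 := (hS s hs).2
      rw [slope_def_field]
      apply div_nonneg (by rw [h0]; linarith) (by linarith))
  linarith [ge_of_tendsto htend hpos]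

end DelayAux

set_option maxHeartbeats 2000000 in
/-- Suppose `μ₂(A₀) := (1/2)·λ_max(A₀ + A₀ᵀ) < 0` and there are `β₁, …, β_p > 0`
with `Σ β_i² = 1` such that the `ℓ₂` operator norm of the block-row matrix
`[(1/β₁) A₁, …, (1/β_p) A_p]` is strictly smaller than `|μ₂(A₀)|`.  Then for every continuous
initial function `φ`, every solution of the unforced delay system tends to `0` as `t → ∞`:
the system is globally asymptotically Lyapunov stable independent of the delays. -/
theorem delay_system_globally_asymptotically_stable {n p : ℕ} (hd : Fin (p + 1) → ℝ)
    (hd0 : hd 0 = 0) (hdmono : StrictMono hd)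
    (A : Fin (p + 1) → Matrix (Fin n) (Fin n) ℝ)
    (hsym : (A 0 + (A 0)ᵀ).IsHermitian)
    (hμ : (1 / 2 : ℝ) * (⨆ i : Fin n, hsym.eigenvalues i) < 0)
    (β : Fin p → ℝ) (hβpos : ∀ i, 0 < β i) (hβsum : ∑ i, β i ^ 2 = 1)
    (hnorm :
      ‖(Matrix.of fun (k : Fin n) (q : Fin p × Fin n) =>
          (β q.1)⁻¹ * A q.1.succ k q.2 : Matrix (Fin n) (Fin p × Fin n) ℝ)‖ <
        |(1 / 2 : ℝ) * (⨆ i : Fin n, hsym.eigenvalues i)|) :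
    ∀ φ : ℝ → Fin n → ℝ, ContinuousOn φ (Set.Icc (-(hd (Fin.last p))) 0) →
      ∀ x : ℝ → Fin n → ℝ, IsUnforcedDelaySolution hd A φ x →
        Filter.Tendsto x Filter.atTop (nhds 0) := by
  intro φ hφ x hx
  obtain ⟨hxc, hxφ, hxint⟩ := hx
  -- degenerate cases
  rcases Nat.eq_zero_or_pos p with hp | hp
  · exfalso; subst hp; simpa using hβsum
  -- notation
  set h : ℝ := hd (Fin.last p) with hh
  have hpos : 0 < h := by
    rw [hh, ← hd0]
    exact hdmono (by rw [Fin.lt_def]; simpa using hp)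
  have hhi_le : ∀ i, hd i ≤ h := fun i => hdmono.monotone (Fin.le_last i)
  have hhi_nonneg : ∀ i, 0 ≤ hd i := fun i => by
    rw [← hd0]; exact hdmono.monotone (Fin.zero_le i)
  set μ : ℝ := (1/2 : ℝ) * (⨆ i : Fin n, hsym.eigenvalues i) with hμdef
  set B : Matrix (Fin n) (Fin p × Fin n) ℝ :=
    Matrix.of fun (k : Fin n) (q : Fin p × Fin n) => (β q.1)⁻¹ * A q.1.succ k q.2 with hB
  set c : ℝ := ‖B‖ with hc
  have hc0 : (0:ℝ) ≤ c := norm_nonneg _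
  have hcμ : c < -μ := by rwa [abs_of_neg hμ, hc] at hnorm
  -- choose the decay rate γ
  obtain ⟨γ, hγ0, hγ⟩ : ∃ γ : ℝ, 0 < γ ∧ γ + μ + c * Real.exp (γ * h) < 0 := by
    have hFc : Filter.Tendsto (fun γ : ℝ => γ + μ + c * Real.exp (γ * h)) (𝓝 0)
        (𝓝 ((0:ℝ) + μ + c * Real.exp (0 * h))) := by
      apply Continuous.tendsto
      fun_prop
    have h0 : (0:ℝ) + μ + c * Real.exp (0 * h) < 0 := by
      rw [zero_mul, Real.exp_zero]; linarith
    have hev : ∀ᶠ γ' in 𝓝 (0:ℝ), γ' + μ + c * Real.exp (γ' * h) < 0 :=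
      hFc.eventually_lt_const h0
    obtain ⟨γ, hγlt, hγpos⟩ :=
      ((hev.filter_mono (nhdsWithin_le_nhds (s := Set.Ioi (0:ℝ)))).and
        eventually_mem_nhdsWithin).exists
    exact ⟨γ, hγpos, hγlt⟩
  -- Euclidean reformulation
  set X : ℝ → EuclideanSpace ℝ (Fin n) :=
    fun t => (EuclideanSpace.equiv (Fin n) ℝ).symm (x t) with hXdef
  have hXc : ContinuousOn X (Set.Ici (-h)) :=
    (EuclideanSpace.equiv (Fin n) ℝ).symm.continuous.comp_continuousOn hxc
  have hXnorm_sq : ∀ t, ‖X t‖ ^ 2 = x t ⬝ᵥ x t := fun t => DelayAux.euclid_norm_sq (x t)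
  -- the vector field
  set f : ℝ → (Fin n → ℝ) := fun τ => ∑ i : Fin (p+1), A i *ᵥ x (τ - hd i) with hf
  have hAcont : ∀ i : Fin (p+1), Continuous fun v : Fin n → ℝ => A i *ᵥ v := by
    intro i
    have := LinearMap.continuous_of_finiteDimensional (𝕜 := ℝ) ((A i).mulVecLin)
    exact this
  have hfc : ContinuousOn f (Set.Ici 0) := by
    apply continuousOn_finset_sum
    intro i _
    apply (hAcont i).comp_continuousOn
    apply hxc.comp ((continuous_sub_right (hd i)).continuousOn)
    intro τ hτ
    simp only [Set.mem_Ici] at *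
    linarith [hhi_le i]
  -- the solution is differentiable for positive times
  have hderiv : ∀ t₀ : ℝ, 0 < t₀ →
      HasDerivAt X ((EuclideanSpace.equiv (Fin n) ℝ).symm (f t₀)) t₀ := by
    intro t₀ ht₀
    have hmem : Set.Ici (0:ℝ) ∈ 𝓝 t₀ :=
      Filter.mem_of_superset (isOpen_Ioi.mem_nhds ht₀) Set.Ioi_subset_Ici_self
    have hint : IntervalIntegrable f MeasureTheory.volume 0 t₀ := by
      apply ContinuousOn.intervalIntegrable
      apply hfc.mono
      rw [Set.uIcc_of_le ht₀.le]
      exact fun s hs => hs.1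
    have hmeas : StronglyMeasurableAtFilter f (𝓝 t₀) MeasureTheory.volume :=
      ContinuousOn.stronglyMeasurableAtFilter isOpen_Ioi
        (hfc.mono Set.Ioi_subset_Ici_self) t₀ ht₀
    have hcont : ContinuousAt f t₀ := hfc.continuousAt hmem
    have h1 : HasDerivAt (fun t => x 0 + ∫ τ in (0:ℝ)..t, f τ) (f t₀) t₀ :=
      (intervalIntegral.integral_hasDerivAt_right hint hmeas hcont).const_add (x 0)
    have h2 : x =ᶠ[𝓝 t₀] fun t => x 0 + ∫ τ in (0:ℝ)..t, f τ := by
      filter_upwards [isOpen_Ioi.mem_nhds ht₀] with t ht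
      exact hxint t (le_of_lt ht)
    have h3 : HasDerivAt x (f t₀) t₀ := h1.congr_of_eventuallyEq h2
    exact ((EuclideanSpace.equiv (Fin n) ℝ).symm.toContinuousLinearMap.hasFDerivAt).comp_hasDerivAt
      t₀ h3
  -- the sup of the norm on the initial interval
  obtain ⟨s₀, hs₀mem, hs₀max⟩ :=
    (isCompact_Icc (a := -h) (b := 0)).exists_isMaxOn ⟨0, by constructor <;> linarith⟩
      ((hXc.mono (fun s hs => hs.1)).norm)
  set Mx : ℝ := ‖X s₀‖ with hMxdef
  have hMx : ∀ s ∈ Set.Icc (-h) 0, ‖X s‖ ≤ Mx := fun s hs => hs₀max hs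
  have hMx0 : 0 ≤ Mx := norm_nonneg _
  -- the key exponential bound
  have key : ∀ t, -h ≤ t → ‖X t‖ ≤ (Mx + 1) * Real.exp (-γ * t) := by
    by_contra hcon
    push_neg at hcon
    obtain ⟨t₁, ht₁, hlt₁⟩ := hcon
    have hbase : ∀ s, -h ≤ s → s ≤ 0 → ‖X s‖ ≤ (Mx + 1) * Real.exp (-γ * s) := by
      intro s hs1 hs2
      have h1 : ‖X s‖ ≤ Mx := hMx s ⟨hs1, hs2⟩
      have h2 : (1:ℝ) ≤ Real.exp (-γ * s) := Real.one_le_exp (by nlinarith [hγ0])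
      nlinarith [h1, h2, hMx0]
    set S : Set ℝ := {t : ℝ | 0 < t ∧ (Mx + 1) * Real.exp (-γ * t) < ‖X t‖} with hS
    have hSne : S.Nonempty := by
      refine ⟨t₁, ?_, hlt₁⟩
      by_contra hle
      push_neg at hle
      exact absurd (hbase t₁ ht₁ hle) (not_le.mpr hlt₁)
    have hSbd : BddBelow S := ⟨0, fun s hs => hs.1.le⟩
    set t₀ : ℝ := sInf S with ht₀def
    have ht₀cl : t₀ ∈ closure S := csInf_mem_closure hSne hSbd
    have ht₀0 : 0 ≤ t₀ := le_csInf hSne (fun s hs => hs.1.le)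
    have ht₀h : -h ≤ t₀ := by linarith
    set G : ℝ → ℝ := fun t => ‖X t‖ - (Mx + 1) * Real.exp (-γ * t) with hG
    have hGc : ContinuousOn G (Set.Ici (-h)) := by
      apply ContinuousOn.sub hXc.norm
      fun_prop
    have hSsub : S ⊆ Set.Ici (-h) := fun s hs => by
      simp only [Set.mem_Ici]; linarith [hs.1]
    have hneS : (𝓝[S] t₀).NeBot := mem_closure_iff_nhdsWithin_neBot.mp ht₀cl
    have step1 : 0 ≤ G t₀ := by
      by_contra hneg
      push_neg at hneg
      have hev : ∀ᶠ s in 𝓝[Set.Ici (-h)] t₀, G s < 0 :=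
        Filter.Tendsto.eventually_lt_const hneg (hGc t₀ ht₀h)
      obtain ⟨s, hGs, hsS⟩ :=
        ((hev.filter_mono (nhdsWithin_mono _ hSsub)).and eventually_mem_nhdsWithin).exists
      have h2 : 0 < G s := sub_pos.mpr hsS.2
      linarith
    have step2 : 0 < t₀ := by
      rcases ht₀0.lt_or_eq with h' | h'
      · exact h'
      · exfalso
        have h1 : ‖X 0‖ ≤ Mx := hMx 0 ⟨by linarith, le_refl 0⟩
        have h2 : G t₀ < 0 := by
          rw [← h', hG]
          simp only [mul_zero, neg_zero, Real.exp_zero, mul_one]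
          linarith
        linarith
    have step3 : ∀ s, -h ≤ s → s < t₀ → G s ≤ 0 := by
      intro s hs1 hs2
      rcases le_or_gt s 0 with h' | h'
      · exact sub_nonpos.mpr (hbase s hs1 h')
      · have hns : s ∉ S := fun hmem => absurd (csInf_le hSbd hmem) (not_le.mpr hs2)
        rw [hS, Set.mem_setOf_eq, not_and, not_lt] at hns
        exact sub_nonpos.mpr (hns h')
    have step4 : G t₀ = 0 := by
      refine le_antisymm ?_ step1
      have hcl2 : t₀ ∈ closure (Set.Ico 0 t₀) := by
        rw [closure_Ico (ne_of_lt step2)]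
        exact ⟨ht₀0, le_refl _⟩
      have hne2 : (𝓝[Set.Ico 0 t₀] t₀).NeBot := mem_closure_iff_nhdsWithin_neBot.mp hcl2
      have hct : Filter.Tendsto G (𝓝[Set.Ico 0 t₀] t₀) (𝓝 (G t₀)) :=
        (hGc t₀ ht₀h).mono (fun s hs => by simp only [Set.mem_Ici]; linarith [hs.1])
      exact le_of_tendsto hct (eventually_mem_nhdsWithin.mono
        (fun s hs => step3 s (by linarith [hs.1]) hs.2))
    have hXt₀ : ‖X t₀‖ = (Mx + 1) * Real.exp (-γ * t₀) := by
      rw [hG] at step4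
      simp only at step4
      linarith
    have hbnd : ∀ s, -h ≤ s → s ≤ t₀ → ‖X s‖ ≤ (Mx + 1) * Real.exp (-γ * s) := by
      intro s hs1 hs2
      rcases hs2.lt_or_eq with h' | h'
      · have := step3 s hs1 h'
        rw [hG] at this
        simp only at this
        linarith
      · rw [h']
        exact le_of_eq hXt₀
    set ψ0 : ℝ := (Mx + 1) * Real.exp (-γ * t₀) with hψ0
    have hψ0pos : 0 < ψ0 := by positivity
    set z : Fin p × Fin n → ℝ := fun q => β q.1 * x (t₀ - hd q.1.succ) q.2 with hz
    have hsplit : f t₀ = A 0 *ᵥ x t₀ + B *ᵥ z := by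
      rw [hf]
      simp only
      rw [Fin.sum_univ_succ]
      congr 1
      · rw [hd0, sub_zero]
      · funext k
        simp only [Finset.sum_apply, mulVec, dotProduct, hB, Matrix.of_apply, hz,
          Fintype.sum_prod_type]
        refine Finset.sum_congr rfl fun i _ => Finset.sum_congr rfl fun j _ => ?_
        have : β i ≠ 0 := (hβpos i).ne'
        field_simp
    have hzbnd : ∀ i : Fin p, ‖X (t₀ - hd i.succ)‖ ≤ ψ0 * Real.exp (γ * h) := by
      intro i
      have h1 : -h ≤ t₀ - hd i.succ := by
        have := hhi_le i.succ; linarith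
      have h2 : t₀ - hd i.succ ≤ t₀ := by
        have := hhi_nonneg i.succ; linarith
      calc ‖X (t₀ - hd i.succ)‖ ≤ (Mx + 1) * Real.exp (-γ * (t₀ - hd i.succ)) := hbnd _ h1 h2
        _ ≤ ψ0 * Real.exp (γ * h) := by
            rw [hψ0, mul_assoc, ← Real.exp_add]
            apply mul_le_mul_of_nonneg_left _ (by linarith)
            apply Real.exp_le_exp.mpr
            have h3 := hhi_le i.succ
            have h4 := hhi_nonneg i.succ
            nlinarith [hγ0.le]
    have hznorm : ‖(EuclideanSpace.equiv (Fin p × Fin n) ℝ).symm z‖ ≤ ψ0 * Real.exp (γ * h) := by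
      have hsq : ‖(EuclideanSpace.equiv (Fin p × Fin n) ℝ).symm z‖^2
          ≤ (ψ0 * Real.exp (γ * h))^2 := by
        rw [DelayAux.euclid_norm_sq]
        calc z ⬝ᵥ z
            = ∑ i : Fin p, (β i)^2 * (x (t₀ - hd i.succ) ⬝ᵥ x (t₀ - hd i.succ)) := by
              simp only [dotProduct, hz, Fintype.sum_prod_type, Finset.mul_sum]
              exact Finset.sum_congr rfl fun i _ => Finset.sum_congr rfl fun j _ => by ring
          _ ≤ ∑ i : Fin p, (β i)^2 * (ψ0 * Real.exp (γ * h))^2 := by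
              apply Finset.sum_le_sum
              intro i _
              apply mul_le_mul_of_nonneg_left _ (sq_nonneg _)
              rw [← hXnorm_sq]
              exact pow_le_pow_left₀ (norm_nonneg _) (hzbnd i) 2
          _ = (ψ0 * Real.exp (γ * h))^2 := by rw [← Finset.sum_mul, hβsum, one_mul]
      exact le_of_pow_le_pow_left₀ two_ne_zero (by positivity) hsq
    have hterm1 : (A 0 *ᵥ x t₀) ⬝ᵥ x t₀ ≤ μ * ‖X t₀‖^2 := by
      have c1 : x t₀ ⬝ᵥ ((A 0)ᵀ *ᵥ x t₀) = (A 0 *ᵥ x t₀) ⬝ᵥ x t₀ := by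
        rw [mulVec_transpose, dotProduct_comm (x t₀), ← dotProduct_mulVec, dotProduct_comm]
      have e1 : x t₀ ⬝ᵥ ((A 0 + (A 0)ᵀ) *ᵥ x t₀) = 2 * ((A 0 *ᵥ x t₀) ⬝ᵥ x t₀) := by
        rw [add_mulVec, dotProduct_add, c1, dotProduct_comm (x t₀) (A 0 *ᵥ x t₀)]
        ring
      have e2 := DelayAux.rayleigh_le hsym (x t₀)
      have e3 : μ * (x t₀ ⬝ᵥ x t₀)
          = (1/2) * ((⨆ i : Fin n, hsym.eigenvalues i) * (x t₀ ⬝ᵥ x t₀)) := by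
        rw [hμdef]; ring
      rw [hXnorm_sq]
      linarith [e1, e2, e3]
    have hterm2 : (B *ᵥ z) ⬝ᵥ x t₀ ≤ c * (ψ0 * Real.exp (γ * h)) * ‖X t₀‖ := by
      have e1 : (B *ᵥ z) ⬝ᵥ x t₀ =
          (inner ℝ ((EuclideanSpace.equiv (Fin n) ℝ).symm (B *ᵥ z)) (X t₀) : ℝ) := by
        rw [hXdef]
        exact (DelayAux.euclid_inner_eq _ _).symm
      rw [e1]
      calc (inner ℝ ((EuclideanSpace.equiv (Fin n) ℝ).symm (B *ᵥ z)) (X t₀) : ℝ)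
          ≤ ‖(EuclideanSpace.equiv (Fin n) ℝ).symm (B *ᵥ z)‖ * ‖X t₀‖ := real_inner_le_norm _ _
        _ ≤ (c * ‖(EuclideanSpace.equiv (Fin p × Fin n) ℝ).symm z‖) * ‖X t₀‖ := by
            apply mul_le_mul_of_nonneg_right _ (norm_nonneg _)
            have := B.l2_opNorm_mulVec ((EuclideanSpace.equiv (Fin p × Fin n) ℝ).symm z)
            exact this
        _ ≤ c * (ψ0 * Real.exp (γ * h)) * ‖X t₀‖ := by
            apply mul_le_mul_of_nonneg_right _ (norm_nonneg _)
            exact mul_le_mul_of_nonneg_left hznorm hc0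
    have hfbound : f t₀ ⬝ᵥ x t₀ ≤ (μ + c * Real.exp (γ * h)) * ψ0^2 := by
      calc f t₀ ⬝ᵥ x t₀ = (A 0 *ᵥ x t₀) ⬝ᵥ x t₀ + (B *ᵥ z) ⬝ᵥ x t₀ := by
            rw [hsplit, add_dotProduct]
        _ ≤ μ * ‖X t₀‖^2 + c * (ψ0 * Real.exp (γ * h)) * ‖X t₀‖ := add_le_add hterm1 hterm2
        _ = (μ + c * Real.exp (γ * h)) * ψ0^2 := by
            rw [hXt₀]; ring
    have hXd := hderiv t₀ step2
    have hVd : HasDerivAt (fun t => ‖X t‖^2) (2 * (f t₀ ⬝ᵥ x t₀)) t₀ := by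
      have h1 := HasDerivAt.inner (𝕜 := ℝ) hXd hXd
      have h2 : (fun t => (inner ℝ (X t) (X t) : ℝ)) = fun t => ‖X t‖^2 := by
        funext t; rw [real_inner_self_eq_norm_sq]
      rw [h2] at h1
      have h3 : (inner ℝ (X t₀) ((EuclideanSpace.equiv (Fin n) ℝ).symm (f t₀)) : ℝ)
          + (inner ℝ ((EuclideanSpace.equiv (Fin n) ℝ).symm (f t₀)) (X t₀) : ℝ)
          = 2 * (f t₀ ⬝ᵥ x t₀) := by
        simp only [hXdef]
        rw [DelayAux.euclid_inner_eq, DelayAux.euclid_inner_eq, dotProduct_comm (x t₀)]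
        ring
      rw [h3] at h1
      exact h1
    have hψd : HasDerivAt (fun t => ((Mx + 1) * Real.exp (-γ * t))^2)
        (2 * ψ0 * ((Mx + 1) * (Real.exp (-γ * t₀) * -γ))) t₀ := by
      have h1 : HasDerivAt (fun t : ℝ => -γ * t) (-γ) t₀ := by
        simpa using HasDerivAt.const_mul (-γ) (hasDerivAt_id t₀)
      have h2 := (HasDerivAt.const_mul (Mx + 1) h1.exp).pow 2
      refine h2.congr_deriv ?_
      rw [hψ0]
      push_cast
      ring
    have hd2 : HasDerivAt (fun t => ‖X t‖^2 - ((Mx + 1) * Real.exp (-γ * t))^2)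
        (2 * (f t₀ ⬝ᵥ x t₀) - 2 * ψ0 * ((Mx + 1) * (Real.exp (-γ * t₀) * -γ))) t₀ :=
      hVd.sub hψd
    refine DelayAux.no_deriv_neg_of_pos_right hd2 ?_ ?_ ?_ ht₀cl
    · have hexp : (Mx + 1) * (Real.exp (-γ * t₀) * -γ) = -γ * ψ0 := by rw [hψ0]; ring
      rw [hexp]
      nlinarith [hfbound, mul_pos hψ0pos hψ0pos, hγ, hψ0pos]
    · rw [hXt₀, ← hψ0]; ring
    · intro s hs
      have h1 : t₀ ≤ s := csInf_le hSbd hs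
      have h2 : s ≠ t₀ := by
        intro he
        rw [he] at hs
        exact absurd hs.2 (not_lt.mpr (le_of_eq hXt₀))
      refine ⟨lt_of_le_of_ne h1 (Ne.symm h2), ?_⟩
      have h3 : (Mx + 1) * Real.exp (-γ * s) < ‖X s‖ := hs.2
      have h4 : 0 ≤ (Mx + 1) * Real.exp (-γ * s) := by positivity
      have h5 := pow_lt_pow_left₀ h3 h4 two_ne_zero
      linarith
  -- conclusion
  have hX0 : Filter.Tendsto X Filter.atTop (𝓝 0) := by
    refine squeeze_zero_norm' (a := fun t => (Mx + 1) * Real.exp (-γ * t)) ?_ ?_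
    · filter_upwards [Filter.eventually_ge_atTop (-h)] with t ht
      exact key t ht
    · rw [show (0:ℝ) = (Mx + 1) * 0 by ring]
      apply Filter.Tendsto.const_mul
      apply Real.tendsto_exp_atBot.comp
      exact (Filter.tendsto_const_mul_atBot_of_neg (by linarith : -γ < (0:ℝ))).mpr Filter.tendsto_id
  have hxX : x = fun t => (EuclideanSpace.equiv (Fin n) ℝ) (X t) := by
    funext t; simp [hXdef]; rfl
  rw [hxX]
  have := ((EuclideanSpace.equiv (Fin n) ℝ).continuous.tendsto 0).comp hX0
  simpa [Function.comp_def] using this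
end

section
/- Consider the linear time-invariant delay system with delays 0 = h₀ < h₁ < ⋯ < h_p = h, matrices A₀, …, A_p ∈ ℝ^{n×n} and B ∈ ℝ^{n×m}. Suppose that for every continuous initial function φ : [−h, 0] → ℝⁿ with φ(t) ≥ 0 componentwise on [−h, 0], every continuous input u : [0, ∞) → ℝ^m with u(t) ≥ 0 componentwise for all t ≥ 0, and every solution x of the delay system with data (φ, u), one has x(t) ≥ 0 componentwise for all t ≥ 0. Then A₀ is Metzler, A₁, …, A_p are entrywise nonnegative, and B is entrywise nonnegative. -/
open Matrix intervalIntegral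

open NormedSpace

noncomputable instance {n : ℕ} : NormedAlgebra ℚ ((Fin n → ℝ) →L[ℝ] (Fin n → ℝ)) :=
  NormedAlgebra.restrictScalars ℚ ℝ _

namespace DelayNec

lemma continuous_mulVec {q n : ℕ} (M : Matrix (Fin q) (Fin n) ℝ) :
    Continuous fun v : Fin n → ℝ => M *ᵥ v := by
  have h := LinearMap.continuous_of_finiteDimensional (M.mulVecLin)
  exact h.congr fun v => by simp [Matrix.mulVecLin_apply]

noncomputable def TA {n : ℕ} (M : Matrix (Fin n) (Fin n) ℝ) :
    (Fin n → ℝ) →L[ℝ] (Fin n → ℝ) :=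
  LinearMap.toContinuousLinearMap (M.mulVecLin)

lemma TA_apply {n : ℕ} (M : Matrix (Fin n) (Fin n) ℝ) (v : Fin n → ℝ) :
    TA M v = M *ᵥ v := by
  simp [TA, Matrix.mulVecLin_apply]

lemma exp_smul_mul_exp_neg_smul {n : ℕ} (T : (Fin n → ℝ) →L[ℝ] (Fin n → ℝ)) (t : ℝ) :
    exp (t • T) * exp ((-t) • T) = 1 := by
  rw [← NormedSpace.exp_add_of_commute (((Commute.refl T).smul_left t).smul_right (-t))]
  rw [← add_smul]
  norm_num [NormedSpace.exp_zero]

noncomputable def odeSol {n : ℕ} (T : (Fin n → ℝ) →L[ℝ] (Fin n → ℝ))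
    (f : ℝ → Fin n → ℝ) (a : ℝ) (c : Fin n → ℝ) : ℝ → Fin n → ℝ :=
  fun t => exp (t • T)
    (exp ((-a) • T) c + ∫ s in a..t, exp ((-s) • T) (f s))

lemma odeSol_at {n : ℕ} (T : (Fin n → ℝ) →L[ℝ] (Fin n → ℝ))
    (f : ℝ → Fin n → ℝ) (a : ℝ) (c : Fin n → ℝ) : odeSol T f a c a = c := by
  simp only [odeSol, intervalIntegral.integral_same, add_zero,
    ← ContinuousLinearMap.mul_apply, exp_smul_mul_exp_neg_smul]
  simp

lemma odeSol_hasDerivAt {n : ℕ} {T : (Fin n → ℝ) →L[ℝ] (Fin n → ℝ)}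
    {f : ℝ → Fin n → ℝ} (hf : Continuous f) (a : ℝ) (c : Fin n → ℝ) (t : ℝ) :
    HasDerivAt (odeSol T f a c) (T (odeSol T f a c t) + f t) t := by
  have hw : Continuous fun s : ℝ => exp ((-s) • T) (f s) :=
    (NormedSpace.exp_continuous.comp ((continuous_neg).smul continuous_const)).clm_apply hf
  have hG : HasDerivAt (fun s : ℝ => exp (s • T)) (exp (t • T) * T) t :=
    hasDerivAt_exp_smul_const T t
  have hz : HasDerivAt (fun s : ℝ => ∫ τ in a..s, exp ((-τ) • T) (f τ))
      (exp ((-t) • T) (f t)) t :=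
    intervalIntegral.integral_hasDerivAt_right (hw.intervalIntegrable a t)
      hw.stronglyMeasurable.stronglyMeasurableAtFilter hw.continuousAt
  have hV := hz.const_add (exp ((-a) • T) c)
  have key := hG.clm_apply hV
  have hc : exp (t • T) * T = T * exp (t • T) :=
    (((Commute.refl T).smul_right t).exp_right).symm
  have heq : (exp (t • T) * T)
        (exp ((-a) • T) c + ∫ s in a..t, exp ((-s) • T) (f s))
        + (exp (t • T)) (exp ((-t) • T) (f t))
      = T (odeSol T f a c t) + f t := by
    rw [hc]
    rw [ContinuousLinearMap.mul_apply, ← ContinuousLinearMap.mul_apply (exp (t • T)),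
      exp_smul_mul_exp_neg_smul, ContinuousLinearMap.one_apply]
    rfl
  rw [← heq]
  exact key

lemma odeSol_continuous {n : ℕ} {T : (Fin n → ℝ) →L[ℝ] (Fin n → ℝ)}
    {f : ℝ → Fin n → ℝ} (hf : Continuous f) (a : ℝ) (c : Fin n → ℝ) :
    Continuous (odeSol T f a c) :=
  continuous_iff_continuousAt.2 fun t => (odeSol_hasDerivAt hf a c t).continuousAt

lemma odeSol_integral {n : ℕ} {T : (Fin n → ℝ) →L[ℝ] (Fin n → ℝ)}
    {f : ℝ → Fin n → ℝ} (hf : Continuous f) (a : ℝ) (c : Fin n → ℝ) (a' t : ℝ) :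
    odeSol T f a c t = odeSol T f a c a'
      + ∫ s in a'..t, (T (odeSol T f a c s) + f s) := by
  have hcont : Continuous fun s => T (odeSol T f a c s) + f s :=
    (T.continuous.comp (odeSol_continuous hf a c)).add hf
  rw [intervalIntegral.integral_eq_sub_of_hasDerivAt
    (fun s _ => odeSol_hasDerivAt hf a c s) (hcont.intervalIntegrable a' t)]
  abel



variable {n m p : ℕ}

/-- delayed forcing (without the undelayed `A 0` term) -/
noncomputable def forcing (hd : Fin (p + 1) → ℝ) (A : Fin (p + 1) → Matrix (Fin n) (Fin n) ℝ)
    (B : Matrix (Fin n) (Fin m) ℝ) (u : ℝ → Fin m → ℝ) (g : ℝ → Fin n → ℝ) (τ : ℝ) :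
    Fin n → ℝ :=
  (∑ i ∈ Finset.univ.erase (0 : Fin (p + 1)), (A i) *ᵥ g (τ - hd i)) + B *ᵥ u τ

/-- full right-hand side -/
noncomputable def FF (hd : Fin (p + 1) → ℝ) (A : Fin (p + 1) → Matrix (Fin n) (Fin n) ℝ)
    (B : Matrix (Fin n) (Fin m) ℝ) (u : ℝ → Fin m → ℝ) (g : ℝ → Fin n → ℝ) (τ : ℝ) :
    Fin n → ℝ :=
  (∑ i : Fin (p + 1), (A i) *ᵥ g (τ - hd i)) + B *ᵥ u τ

lemma FF_eq (hd : Fin (p + 1) → ℝ) (hd0 : hd 0 = 0) (A : Fin (p + 1) → Matrix (Fin n) (Fin n) ℝ)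
    (B : Matrix (Fin n) (Fin m) ℝ) (u : ℝ → Fin m → ℝ) (g : ℝ → Fin n → ℝ) (τ : ℝ) :
    FF hd A B u g τ = TA (A 0) (g τ) + forcing hd A B u g τ := by
  simp only [FF, forcing, TA_apply]
  rw [← Finset.add_sum_erase Finset.univ _ (Finset.mem_univ (0 : Fin (p + 1))), hd0]
  simp [add_assoc]

lemma forcing_continuous (hd : Fin (p + 1) → ℝ) (A : Fin (p + 1) → Matrix (Fin n) (Fin n) ℝ)
    (B : Matrix (Fin n) (Fin m) ℝ) {u : ℝ → Fin m → ℝ} (hu : Continuous u)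
    {g : ℝ → Fin n → ℝ} (hg : Continuous g) : Continuous (forcing hd A B u g) := by
  refine Continuous.add ?_ ((continuous_mulVec B).comp hu)
  exact continuous_finset_sum _ fun i _ =>
    (continuous_mulVec (A i)).comp (hg.comp (continuous_id.sub continuous_const))

lemma FF_continuous (hd : Fin (p + 1) → ℝ) (A : Fin (p + 1) → Matrix (Fin n) (Fin n) ℝ)
    (B : Matrix (Fin n) (Fin m) ℝ) {u : ℝ → Fin m → ℝ} (hu : Continuous u)
    {g : ℝ → Fin n → ℝ} (hg : Continuous g) : Continuous (FF hd A B u g) := by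
  refine Continuous.add ?_ ((continuous_mulVec B).comp hu)
  exact continuous_finset_sum _ fun i _ =>
    (continuous_mulVec (A i)).comp (hg.comp (continuous_id.sub continuous_const))

/-- method-of-steps sequence -/
noncomputable def gseq (hd : Fin (p + 1) → ℝ) (A : Fin (p + 1) → Matrix (Fin n) (Fin n) ℝ)
    (B : Matrix (Fin n) (Fin m) ℝ) (u : ℝ → Fin m → ℝ) (φ : ℝ → Fin n → ℝ) (δ : ℝ) :
    ℕ → ℝ → Fin n → ℝ
  | 0 => φ
  | (k + 1) => fun t =>
      if t ≤ (k : ℝ) * δ then gseq hd A B u φ δ k t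
      else odeSol (TA (A 0)) (forcing hd A B u (gseq hd A B u φ δ k)) ((k : ℝ) * δ)
        (gseq hd A B u φ δ k ((k : ℝ) * δ)) t

lemma gseq_succ (hd : Fin (p + 1) → ℝ) (A : Fin (p + 1) → Matrix (Fin n) (Fin n) ℝ)
    (B : Matrix (Fin n) (Fin m) ℝ) (u : ℝ → Fin m → ℝ) (φ : ℝ → Fin n → ℝ) (δ : ℝ)
    (k : ℕ) (t : ℝ) :
    gseq hd A B u φ δ (k + 1) t =
      if t ≤ (k : ℝ) * δ then gseq hd A B u φ δ k t
      else odeSol (TA (A 0)) (forcing hd A B u (gseq hd A B u φ δ k)) ((k : ℝ) * δ)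
        (gseq hd A B u φ δ k ((k : ℝ) * δ)) t := rfl



section Steps

variable (hd : Fin (p + 1) → ℝ) (A : Fin (p + 1) → Matrix (Fin n) (Fin n) ℝ)
    (B : Matrix (Fin n) (Fin m) ℝ) {u : ℝ → Fin m → ℝ} {φ : ℝ → Fin n → ℝ} (δ : ℝ)

lemma gseq_continuous (hφ : Continuous φ) (hu : Continuous u) :
    ∀ k, Continuous (gseq hd A B u φ δ k) := by
  intro k
  induction k with
  | zero => exact hφ
  | succ k ih =>
    show Continuous fun t =>
      if t ≤ (k : ℝ) * δ then gseq hd A B u φ δ k t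
      else odeSol (TA (A 0)) (forcing hd A B u (gseq hd A B u φ δ k)) ((k : ℝ) * δ)
        (gseq hd A B u φ δ k ((k : ℝ) * δ)) t
    refine Continuous.if_le ih
      (odeSol_continuous (forcing_continuous hd A B hu ih) _ _)
      continuous_id continuous_const ?_
    intro x hx
    rw [hx, odeSol_at]

lemma gseq_agree (k : ℕ) (t : ℝ) (ht : t ≤ (k : ℝ) * δ) :
    gseq hd A B u φ δ (k + 1) t = gseq hd A B u φ δ k t := by
  rw [gseq_succ, if_pos ht]

lemma gseq_agree' (hδ0 : 0 < δ) :
    ∀ k l : ℕ, k ≤ l → ∀ t : ℝ, t ≤ (k : ℝ) * δ → gseq hd A B u φ δ l t = gseq hd A B u φ δ k t := by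
  intro k l hkl
  induction l, hkl using Nat.le_induction with
  | base => intro t _; rfl
  | succ l hkl ih =>
    intro t ht
    have hkl' : (k : ℝ) * δ ≤ (l : ℝ) * δ :=
      mul_le_mul_of_nonneg_right (by exact_mod_cast hkl) hδ0.le
    rw [gseq_agree hd A B δ l t (ht.trans hkl'), ih t ht]

lemma gseq_sol (hd0 : hd 0 = 0) (hφ : Continuous φ) (hu : Continuous u)
    (hδ0 : 0 < δ) (hδi : ∀ i : Fin (p + 1), i ≠ 0 → δ ≤ hd i) (hdnn : ∀ i, 0 ≤ hd i) :
    ∀ k : ℕ, ∀ t : ℝ, 0 ≤ t → t ≤ (k : ℝ) * δ →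
      gseq hd A B u φ δ k t = gseq hd A B u φ δ k 0
        + ∫ τ in (0:ℝ)..t, FF hd A B u (gseq hd A B u φ δ k) τ := by
  intro k
  induction k with
  | zero =>
    intro t ht ht2
    have h0 : t = 0 := le_antisymm (by simpa using ht2) ht
    subst h0; simp
  | succ k ih =>
    have hk0 : (0:ℝ) ≤ (k:ℝ) * δ := mul_nonneg (Nat.cast_nonneg k) hδ0.le
    have hgk1 : Continuous (gseq hd A B u φ δ (k+1)) :=
      gseq_continuous hd A B δ hφ hu (k+1)
    have hFFc : Continuous (FF hd A B u (gseq hd A B u φ δ (k+1))) :=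
      FF_continuous hd A B hu hgk1
    have case1 : ∀ t : ℝ, 0 ≤ t → t ≤ (k:ℝ)*δ →
        gseq hd A B u φ δ (k+1) t = gseq hd A B u φ δ (k+1) 0
          + ∫ τ in (0:ℝ)..t, FF hd A B u (gseq hd A B u φ δ (k+1)) τ := by
      intro t ht ht2
      have hEq : Set.EqOn (FF hd A B u (gseq hd A B u φ δ k))
          (FF hd A B u (gseq hd A B u φ δ (k+1))) (Set.uIcc 0 t) := by
        intro τ hτ
        rw [Set.uIcc_of_le ht] at hτ
        simp only [FF]
        congr 1
        refine Finset.sum_congr rfl fun i _ => ?_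
        rw [gseq_agree hd A B δ k (τ - hd i)
          (by nlinarith [hdnn i, hτ.2] : τ - hd i ≤ (k:ℝ)*δ)]
      calc gseq hd A B u φ δ (k+1) t = gseq hd A B u φ δ k t := gseq_agree hd A B δ k t ht2
        _ = gseq hd A B u φ δ k 0 + ∫ τ in (0:ℝ)..t, FF hd A B u (gseq hd A B u φ δ k) τ :=
            ih t ht ht2
        _ = gseq hd A B u φ δ (k+1) 0
              + ∫ τ in (0:ℝ)..t, FF hd A B u (gseq hd A B u φ δ (k+1)) τ := by
            rw [← gseq_agree hd A B δ k 0 hk0, intervalIntegral.integral_congr hEq]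
    intro t ht ht2
    by_cases hc : t ≤ (k:ℝ)*δ
    · exact case1 t ht hc
    push_neg at hc
    have hforc : Continuous (forcing hd A B u (gseq hd A B u φ δ k)) :=
      forcing_continuous hd A B hu (gseq_continuous hd A B δ hφ hu k)
    have hgy : ∀ s : ℝ, (k:ℝ)*δ ≤ s → gseq hd A B u φ δ (k+1) s
        = odeSol (TA (A 0)) (forcing hd A B u (gseq hd A B u φ δ k)) ((k:ℝ)*δ)
            (gseq hd A B u φ δ k ((k:ℝ)*δ)) s := by
      intro s hs
      rcases eq_or_lt_of_le hs with h | h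
      · rw [gseq_succ, if_pos h.ge, ← h, odeSol_at]
      · rw [gseq_succ, if_neg (not_le.2 h)]
    have hEq2 : Set.EqOn
        (fun s => TA (A 0) (odeSol (TA (A 0)) (forcing hd A B u (gseq hd A B u φ δ k))
            ((k:ℝ)*δ) (gseq hd A B u φ δ k ((k:ℝ)*δ)) s) + forcing hd A B u (gseq hd A B u φ δ k) s)
        (FF hd A B u (gseq hd A B u φ δ (k+1))) (Set.uIcc ((k:ℝ)*δ) t) := by
      intro s hs
      rw [Set.uIcc_of_le hc.le] at hs
      have h2 : forcing hd A B u (gseq hd A B u φ δ k) s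
          = forcing hd A B u (gseq hd A B u φ δ (k+1)) s := by
        simp only [forcing]
        congr 1
        refine Finset.sum_congr rfl fun i hi => ?_
        have hii : i ≠ 0 := Finset.ne_of_mem_erase hi
        rw [gseq_agree hd A B δ k (s - hd i) ?_]
        push_cast at ht2 ⊢
        nlinarith [hδi i hii, hs.2]
      simp only [FF_eq hd hd0]
      rw [← hgy s hs.1, h2]
    have hι := odeSol_integral (T := TA (A 0)) hforc ((k:ℝ)*δ) (gseq hd A B u φ δ k ((k:ℝ)*δ)) ((k:ℝ)*δ) t
    have hadj : (∫ τ in (0:ℝ)..((k:ℝ)*δ), FF hd A B u (gseq hd A B u φ δ (k+1)) τ)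
        + ∫ τ in ((k:ℝ)*δ)..t, FF hd A B u (gseq hd A B u φ δ (k+1)) τ
        = ∫ τ in (0:ℝ)..t, FF hd A B u (gseq hd A B u φ δ (k+1)) τ :=
      intervalIntegral.integral_add_adjacent_intervals
        (hFFc.intervalIntegrable _ _) (hFFc.intervalIntegrable _ _)
    calc gseq hd A B u φ δ (k+1) t
        = odeSol (TA (A 0)) (forcing hd A B u (gseq hd A B u φ δ k)) ((k:ℝ)*δ)
            (gseq hd A B u φ δ k ((k:ℝ)*δ)) t := hgy t hc.le
      _ = odeSol (TA (A 0)) (forcing hd A B u (gseq hd A B u φ δ k)) ((k:ℝ)*δ)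
            (gseq hd A B u φ δ k ((k:ℝ)*δ)) ((k:ℝ)*δ)
          + ∫ s in ((k:ℝ)*δ)..t, (TA (A 0) (odeSol (TA (A 0))
              (forcing hd A B u (gseq hd A B u φ δ k)) ((k:ℝ)*δ)
              (gseq hd A B u φ δ k ((k:ℝ)*δ)) s) + forcing hd A B u (gseq hd A B u φ δ k) s) := hι
      _ = gseq hd A B u φ δ (k+1) ((k:ℝ)*δ)
          + ∫ s in ((k:ℝ)*δ)..t, FF hd A B u (gseq hd A B u φ δ (k+1)) s := by
          rw [intervalIntegral.integral_congr hEq2, odeSol_at,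
            ← gseq_agree hd A B δ k ((k:ℝ)*δ) le_rfl]
      _ = (gseq hd A B u φ δ (k+1) 0
            + ∫ τ in (0:ℝ)..((k:ℝ)*δ), FF hd A B u (gseq hd A B u φ δ (k+1)) τ)
          + ∫ s in ((k:ℝ)*δ)..t, FF hd A B u (gseq hd A B u φ δ (k+1)) s := by
          rw [← case1 ((k:ℝ)*δ) hk0 le_rfl]
      _ = gseq hd A B u φ δ (k+1) 0
            + ∫ τ in (0:ℝ)..t, FF hd A B u (gseq hd A B u φ δ (k+1)) τ := by
          rw [add_assoc, hadj]

end Steps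

lemma gseq_zero (hd : Fin (p + 1) → ℝ) (A : Fin (p + 1) → Matrix (Fin n) (Fin n) ℝ)
    (B : Matrix (Fin n) (Fin m) ℝ) (u : ℝ → Fin m → ℝ) (φ : ℝ → Fin n → ℝ) (δ : ℝ) :
    gseq hd A B u φ δ 0 = φ := rfl

lemma delay_exists (hd : Fin (p + 1) → ℝ) (hd0 : hd 0 = 0) (hdmono : StrictMono hd)
    (A : Fin (p + 1) → Matrix (Fin n) (Fin n) ℝ) (B : Matrix (Fin n) (Fin m) ℝ)
    {φ : ℝ → Fin n → ℝ} {u : ℝ → Fin m → ℝ} (hφ : Continuous φ) (hu : Continuous u) :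
    ∃ x : ℝ → Fin n → ℝ, Continuous x ∧ (∀ s : ℝ, s ≤ 0 → x s = φ s) ∧
      ∀ t : ℝ, 0 ≤ t → x t = x 0 + ∫ τ in (0:ℝ)..t, FF hd A B u x τ := by
  classical
  obtain ⟨δ, hδ0, hδi⟩ : ∃ δ : ℝ, 0 < δ ∧ ∀ i : Fin (p + 1), i ≠ 0 → δ ≤ hd i := by
    rcases Nat.eq_zero_or_pos p with hp | hp
    · subst hp
      refine ⟨1, one_pos, fun i hi => absurd (Fin.ext ?_) hi⟩
      have := i.isLt
      simp only [Fin.val_zero]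
      omega
    · refine ⟨hd ⟨1, by omega⟩, ?_, fun i hi => ?_⟩
      · rw [← hd0]
        exact hdmono (by rw [Fin.lt_def]; simp)
      · refine hdmono.monotone ?_
        rw [Fin.le_def]
        have h1 : (⟨1, by omega⟩ : Fin (p+1)).val = 1 := rfl
        have h0 : (0 : Fin (p+1)).val = 0 := rfl
        rcases Nat.eq_zero_or_pos i.val with h | h
        · exact absurd (Fin.ext (by rw [h, h0])) hi
        · rw [h1]; omega
  have hdnn : ∀ i, 0 ≤ hd i := fun i => hd0 ▸ hdmono.monotone (Fin.zero_le i)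
  set x : ℝ → Fin n → ℝ := fun t => gseq hd A B u φ δ (⌈t / δ⌉₊) t with hx
  have hceil : ∀ t : ℝ, t ≤ (⌈t / δ⌉₊ : ℝ) * δ := by
    intro t
    rw [← div_le_iff₀ hδ0]
    exact Nat.le_ceil _
  have xeq : ∀ (k : ℕ) (t : ℝ), t ≤ (k : ℝ) * δ → x t = gseq hd A B u φ δ k t := by
    intro k t ht
    have e1 : gseq hd A B u φ δ (max k ⌈t / δ⌉₊) t = gseq hd A B u φ δ (⌈t / δ⌉₊) t :=
      gseq_agree' hd A B δ hδ0 _ _ (le_max_right _ _) t (hceil t)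
    have e2 : gseq hd A B u φ δ (max k ⌈t / δ⌉₊) t = gseq hd A B u φ δ k t :=
      gseq_agree' hd A B δ hδ0 _ _ (le_max_left _ _) t ht
    rw [hx]
    dsimp only
    rw [← e1, e2]
  refine ⟨x, ?_, ?_, ?_⟩
  · rw [continuous_iff_continuousAt]
    intro t
    have h1 : t < ((⌈t / δ⌉₊ + 1 : ℕ) : ℝ) * δ := by
      have := hceil t
      push_cast
      nlinarith
    refine ((gseq_continuous hd A B δ hφ hu (⌈t / δ⌉₊ + 1)).continuousAt).congr ?_
    refine Filter.eventuallyEq_of_mem (Iio_mem_nhds h1) fun s hs => ?_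
    exact (xeq _ s (le_of_lt hs)).symm
  · intro s hs
    have h0 := xeq 0 s (by simpa using hs)
    rwa [gseq_zero] at h0
  · intro t ht
    have htk := hceil t
    have hk0 : (0:ℝ) ≤ (⌈t / δ⌉₊ : ℝ) * δ := mul_nonneg (Nat.cast_nonneg _) hδ0.le
    have hEq : Set.EqOn (FF hd A B u (gseq hd A B u φ δ ⌈t / δ⌉₊)) (FF hd A B u x)
        (Set.uIcc 0 t) := by
      intro τ hτ
      rw [Set.uIcc_of_le ht] at hτ
      simp only [FF]
      congr 1
      refine Finset.sum_congr rfl fun i _ => ?_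
      rw [xeq ⌈t / δ⌉₊ (τ - hd i) (by nlinarith [hdnn i, hτ.2])]
    rw [xeq ⌈t / δ⌉₊ t htk, xeq ⌈t / δ⌉₊ 0 hk0,
      gseq_sol hd A B δ hd0 hφ hu hδ0 hδi hdnn _ t ht htk,
      intervalIntegral.integral_congr hEq]

lemma sol_deriv_nonneg (hd : Fin (p + 1) → ℝ) (hdnn : ∀ i, 0 ≤ hd i)
    (hdle : ∀ i, hd i ≤ hd (Fin.last p))
    (A : Fin (p + 1) → Matrix (Fin n) (Fin n) ℝ) (B : Matrix (Fin n) (Fin m) ℝ)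
    (φ : ℝ → Fin n → ℝ) {u : ℝ → Fin m → ℝ} (hu : ContinuousOn u (Set.Ici 0))
    {x : ℝ → Fin n → ℝ} (hsol : _root_.IsDelaySolution hd A B φ u x)
    (hx : ∀ t : ℝ, 0 ≤ t → ∀ k, 0 ≤ x t k) (k : Fin n) (hk0 : x 0 k = 0) :
    0 ≤ ((∑ i : Fin (p + 1), A i *ᵥ x (0 - hd i)) + B *ᵥ u 0) k := by
  classical
  obtain ⟨hxc, hxφ, hint⟩ := hsol
  set F : ℝ → Fin n → ℝ :=
    fun τ => (∑ i : Fin (p + 1), A i *ᵥ x (τ - hd i)) + B *ᵥ u τ with hF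
  have hFc : ContinuousOn F (Set.Ici 0) := by
    refine ContinuousOn.add ?_ ((continuous_mulVec B).comp_continuousOn hu)
    refine continuousOn_finset_sum _ fun i _ => ?_
    refine (continuous_mulVec (A i)).comp_continuousOn ?_
    refine ContinuousOn.comp hxc ((continuous_id.sub continuous_const).continuousOn) ?_
    intro τ hτ
    simp only [Set.mem_Ici] at hτ ⊢
    have h1 := hdle i
    have h2 := hdnn i
    linarith
  have hFk : ContinuousOn (fun τ => F τ k) (Set.Ici 0) :=
    (continuous_apply k).comp_continuousOn hFc
  have hge : ∀ t : ℝ, 0 ≤ t → 0 ≤ ∫ τ in (0:ℝ)..t, F τ k := by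
    intro t ht
    have hxt := hint t ht
    have hInt : IntervalIntegrable F MeasureTheory.volume 0 t :=
      (hFc.mono (by rw [Set.uIcc_of_le ht]; exact Set.Icc_subset_Ici_self)).intervalIntegrable
    have hproj := (ContinuousLinearMap.proj (R := ℝ) (φ := fun _ : Fin n => ℝ)
      k).intervalIntegral_comp_comm hInt
    have h2 : (∫ τ in (0:ℝ)..t, F τ) k = ∫ τ in (0:ℝ)..t, F τ k := by
      simpa using hproj.symm
    have h3 := congrFun hxt k
    rw [Pi.add_apply, hk0, zero_add, h2] at h3
    rw [← h3]
    exact hx t ht k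
  by_contra hneg
  push_neg at hneg
  have hF0 : F 0 k < 0 := hneg
  have hcw : ContinuousWithinAt (fun τ => F τ k) (Set.Ici 0) 0 := hFk 0 Set.self_mem_Ici
  have hev : (fun τ => F τ k) ⁻¹' Set.Iio (F 0 k / 2) ∈ nhdsWithin 0 (Set.Ici 0) :=
    hcw (Iio_mem_nhds (by linarith))
  rcases mem_nhdsWithin.1 hev with ⟨U, hUo, hU0, hUsub⟩
  rcases Metric.isOpen_iff.1 hUo 0 hU0 with ⟨ε, hε0, hball⟩
  have hd2 : 0 < ε / 2 := by positivity
  have hsub : ∀ τ ∈ Set.Icc (0:ℝ) (ε/2), F τ k < F 0 k / 2 := by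
    intro τ hτ
    refine hUsub ⟨hball ?_, hτ.1⟩
    rw [Metric.mem_ball, Real.dist_eq, sub_zero, abs_of_nonneg hτ.1]
    linarith [hτ.2]
  have hIcc : IntervalIntegrable (fun τ => F τ k) MeasureTheory.volume 0 (ε/2) :=
    (hFk.mono (by rw [Set.uIcc_of_le hd2.le]; exact Set.Icc_subset_Ici_self)).intervalIntegrable
  have hmono := intervalIntegral.integral_mono_on hd2.le hIcc intervalIntegrable_const
    (fun τ hτ => le_of_lt (hsub τ hτ))
  rw [intervalIntegral.integral_const, smul_eq_mul, sub_zero] at hmono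
  have hge2 := hge (ε/2) hd2.le
  have hlt : ε/2 * (F 0 k / 2) < 0 := mul_neg_of_pos_of_neg hd2 (by linarith)
  linarith

section Main

variable {hd : Fin (p + 1) → ℝ} {A : Fin (p + 1) → Matrix (Fin n) (Fin n) ℝ}
    {B : Matrix (Fin n) (Fin m) ℝ}

theorem necessity (hd0 : hd 0 = 0) (hdmono : StrictMono hd)
    (hpos : ∀ φ : ℝ → Fin n → ℝ,
      ContinuousOn φ (Set.Icc (-(hd (Fin.last p))) 0) →
      (∀ s ∈ Set.Icc (-(hd (Fin.last p))) 0, ∀ k : Fin n, 0 ≤ φ s k) →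
      ∀ u : ℝ → Fin m → ℝ, ContinuousOn u (Set.Ici 0) →
      (∀ t : ℝ, 0 ≤ t → ∀ j : Fin m, 0 ≤ u t j) →
      ∀ x : ℝ → Fin n → ℝ, _root_.IsDelaySolution hd A B φ u x →
      ∀ t : ℝ, 0 ≤ t → ∀ k : Fin n, 0 ≤ x t k) :
    (∀ k j : Fin n, k ≠ j → 0 ≤ A 0 k j) ∧
      (∀ i : Fin (p + 1), i ≠ 0 → ∀ k j : Fin n, 0 ≤ A i k j) ∧
      (∀ k : Fin n, ∀ j : Fin m, 0 ≤ B k j) := by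
  classical
  have hdnn : ∀ i, 0 ≤ hd i := fun i => hd0 ▸ hdmono.monotone (Fin.zero_le i)
  have hdle : ∀ i, hd i ≤ hd (Fin.last p) := fun i => hdmono.monotone (Fin.le_last i)
  have hsingle : ∀ {q : ℕ} (j k' : Fin q), (0:ℝ) ≤ (Pi.single j (1:ℝ) : Fin q → ℝ) k' := by
    intro q j k'
    rw [Pi.single_apply]
    split <;> norm_num
  have main : ∀ (i : Fin (p + 1)) (k j : Fin n), (i = 0 → k ≠ j) → 0 ≤ A i k j := by
    intro i k j hkj
    set f : Fin (p + 1) → ℝ := fun l => if l = i then 1 else |hd i - hd l| with hf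
    have hne : (Finset.univ : Finset (Fin (p + 1))).Nonempty := ⟨i, Finset.mem_univ i⟩
    set ε : ℝ := Finset.univ.inf' hne f with hε
    have hε0 : 0 < ε := by
      rw [hε, Finset.lt_inf'_iff]
      intro l _
      rw [hf]
      dsimp only
      split
      · norm_num
      · next hl => exact abs_pos.2 (sub_ne_zero.2 fun hh => hl (hdmono.injective hh).symm)
    have hεle : ∀ l, l ≠ i → ε ≤ |hd i - hd l| := by
      intro l hl
      have h := Finset.inf'_le f (Finset.mem_univ l)
      rw [hf] at h
      dsimp only at h
      rw [if_neg hl] at h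
      exact h
    set φ : ℝ → Fin n → ℝ :=
      fun s => (max 0 (1 - |s + hd i| / ε)) • (Pi.single j 1 : Fin n → ℝ) with hφ
    have hφc : Continuous φ := by
      refine Continuous.smul (?_ : Continuous fun s : ℝ => max 0 (1 - |s + hd i| / ε)) continuous_const
      exact continuous_const.max
        (continuous_const.sub (((continuous_id.add continuous_const).abs).div_const ε))
    have hφval : ∀ l : Fin (p + 1), l ≠ i → φ (-hd l) = 0 := by
      intro l hl
      rw [hφ]
      dsimp only
      have h1 : |(-hd l) + hd i| = |hd i - hd l| := by rw [neg_add_eq_sub]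
      have h2 : (1 : ℝ) - |(-hd l) + hd i| / ε ≤ 0 := by
        rw [h1, sub_nonpos, le_div_iff₀ hε0, one_mul]
        exact hεle l hl
      rw [max_eq_left h2, zero_smul]
    have hφi : φ (-hd i) = Pi.single j 1 := by
      rw [hφ]
      dsimp only
      rw [neg_add_cancel, abs_zero, zero_div, sub_zero, max_eq_right zero_le_one, one_smul]
    have hφnn : ∀ (s : ℝ) (k' : Fin n), 0 ≤ φ s k' := by
      intro s k'
      rw [hφ]
      dsimp only
      rw [Pi.smul_apply, smul_eq_mul]
      exact mul_nonneg (le_max_left _ _) (hsingle j k')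
    obtain ⟨x, hxc, hxini, hxint⟩ := delay_exists hd hd0 hdmono A B hφc
      (continuous_const : Continuous fun _ : ℝ => (0 : Fin m → ℝ))
    have hsol : _root_.IsDelaySolution hd A B φ (fun _ => 0) x :=
      ⟨hxc.continuousOn, fun s hs => hxini s hs.2, fun t ht => hxint t ht⟩
    have hxnn := hpos φ hφc.continuousOn (fun s _ k' => hφnn s k') (fun _ => 0)
      continuous_const.continuousOn (fun _ _ _ => le_rfl) x hsol
    have hx0 : x 0 = φ 0 := hxini 0 le_rfl
    have h00 : φ 0 = φ (-hd 0) := by rw [hd0, neg_zero]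
    have hx0k : x 0 k = 0 := by
      rcases eq_or_ne i 0 with hi | hi
      · subst hi
        rw [hx0, h00, hφi, Pi.single_apply, if_neg (hkj rfl)]
      · rw [hx0, h00, hφval 0 (Ne.symm hi)]
        rfl
    have hkey := sol_deriv_nonneg hd hdnn hdle A B φ continuous_const.continuousOn
      hsol hxnn k hx0k
    have hxl : ∀ l : Fin (p + 1), x (0 - hd l) = φ (-hd l) := by
      intro l
      rw [zero_sub]
      exact hxini (-hd l) (neg_nonpos.2 (hdnn l))
    have hsum : (∑ l : Fin (p + 1), A l *ᵥ x (0 - hd l)) = A i *ᵥ (Pi.single j 1) := by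
      rw [Finset.sum_eq_single i]
      · rw [hxl i, hφi]
      · intro l _ hl
        rw [hxl l, hφval l hl, Matrix.mulVec_zero]
      · intro h
        exact absurd (Finset.mem_univ i) h
    rw [hsum] at hkey
    rw [Matrix.mulVec_zero, add_zero, Matrix.mulVec_single] at hkey
    simpa using hkey
  have mainB : ∀ (k : Fin n) (j : Fin m), 0 ≤ B k j := by
    intro k j
    obtain ⟨x, hxc, hxini, hxint⟩ := delay_exists hd hd0 hdmono A B
      (continuous_const : Continuous fun _ : ℝ => (0 : Fin n → ℝ))
      (continuous_const : Continuous fun _ : ℝ => (Pi.single j 1 : Fin m → ℝ))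
    have hsol : _root_.IsDelaySolution hd A B (fun _ => 0) (fun _ => Pi.single j 1) x :=
      ⟨hxc.continuousOn, fun s hs => hxini s hs.2, fun t ht => hxint t ht⟩
    have hxnn := hpos _ continuous_const.continuousOn (fun s _ k' => le_rfl) _
      continuous_const.continuousOn (fun t _ j' => hsingle j j') x hsol
    have hx0k : x 0 k = 0 := by
      rw [hxini 0 le_rfl]
      rfl
    have hkey := sol_deriv_nonneg hd hdnn hdle A B _ continuous_const.continuousOn
      hsol hxnn k hx0k
    have hxl : ∀ l : Fin (p + 1), x (0 - hd l) = 0 := by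
      intro l
      rw [zero_sub]
      exact hxini (-hd l) (neg_nonpos.2 (hdnn l))
    have hsum : (∑ l : Fin (p + 1), A l *ᵥ x (0 - hd l)) = 0 := by
      refine Finset.sum_eq_zero fun l _ => ?_
      rw [hxl l, Matrix.mulVec_zero]
    rw [hsum, zero_add, Matrix.mulVec_single] at hkey
    simpa using hkey
  exact ⟨fun k j hkj => main 0 k j (fun _ => hkj),
    fun i hi k j => main i k j (fun h => absurd h hi), mainB⟩

end Main

end DelayNec

/-- If every solution of the delay system with componentwise nonnegative
continuous initial function and componentwise nonnegative continuous input stays componentwise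
nonnegative for all `t ≥ 0`, then `A₀` is Metzler, `A₁, …, A_p` are entrywise nonnegative and
`B` is entrywise nonnegative. -/
theorem delay_system_positive_necessity {n m p : ℕ} (hd : Fin (p + 1) → ℝ)
    (hd0 : hd 0 = 0) (hdmono : StrictMono hd)
    (A : Fin (p + 1) → Matrix (Fin n) (Fin n) ℝ) (B : Matrix (Fin n) (Fin m) ℝ)
    (hpos : ∀ φ : ℝ → Fin n → ℝ,
      ContinuousOn φ (Set.Icc (-(hd (Fin.last p))) 0) →
      (∀ s ∈ Set.Icc (-(hd (Fin.last p))) 0, ∀ k : Fin n, 0 ≤ φ s k) →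
      ∀ u : ℝ → Fin m → ℝ, ContinuousOn u (Set.Ici 0) →
      (∀ t : ℝ, 0 ≤ t → ∀ j : Fin m, 0 ≤ u t j) →
      ∀ x : ℝ → Fin n → ℝ, IsDelaySolution hd A B φ u x →
      ∀ t : ℝ, 0 ≤ t → ∀ k : Fin n, 0 ≤ x t k) :
    (A 0).IsMetzler ∧
      (∀ i : Fin (p + 1), i ≠ 0 → ∀ k j : Fin n, 0 ≤ A i k j) ∧
      (∀ k : Fin n, ∀ j : Fin m, 0 ≤ B k j) := by
  obtain ⟨h1, h2, h3⟩ := DelayNec.necessity hd0 hdmono hpos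
  exact ⟨h1, h2, h3⟩
end
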